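/- arXiv:0709.3596 — 3 statements merged into one kernel-verified Lean document; each statement's English description precedes it below -/
import Mathlib

section
/- Let σ be a Borel measure on (0,∞) and let u ∈ 𝔇_1 with h_u < ∞. Then there exists a gauge function ū ∈ 𝔇_1 such that ū ≺ u (that is, ū/u tends monotonically to infinity at 0) and h_{ū} = h_u. -/
open MeasureTheory Filter Set Topology
open scoped ENNReal NNReal Classical

noncomputable section

namespace LevyFractal

/-! ### Gauge functions -/

/-- The class `𝔇` of gauge functions: nondecreasing near `0`, vanishing and
(right-)continuous at `0`. -/
def IsGauge (g : ℝ → ℝ) : Prop :=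
  g 0 = 0 ∧ Tendsto g (𝓝[>] (0:ℝ)) (𝓝 0) ∧ ∃ ε > 0, MonotoneOn g (Icc (0:ℝ) ε)

/-- The class `𝔇₁`: gauge functions such that `r ↦ g r / r` is positive and
nonincreasing near `0`. -/
def IsGauge1 (g : ℝ → ℝ) : Prop :=
  IsGauge g ∧ ∃ ε > 0, (∀ r ∈ Ioc (0:ℝ) ε, 0 < g r / r) ∧
    AntitoneOn (fun r => g r / r) (Ioc (0:ℝ) ε)

/-- The gauge function `g₁ : r ↦ r * inf_{0 < ρ ≤ r} g ρ / ρ`. -/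
def gOne (g : ℝ → ℝ) : ℝ → ℝ :=
  fun r => r * sInf ((fun ρ => g ρ / ρ) '' Ioc (0:ℝ) r)

/-- `GaugePrec gb g` means `gb ≺ g`: the quotient `gb/g` tends monotonically to
infinity at `0`. -/
def GaugePrec (gb g : ℝ → ℝ) : Prop :=
  ∃ ε > 0, AntitoneOn (fun r => gb r / g r) (Ioc (0:ℝ) ε) ∧
    Tendsto (fun r => gb r / g r) (𝓝[>] (0:ℝ)) atTop

/-- The Hausdorff `g`-measure associated with a gauge function `g`. -/
def hausdorffGauge {X : Type*} [EMetricSpace X] [MeasurableSpace X] [BorelSpace X]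
    (g : ℝ → ℝ) : Measure X :=
  Measure.mkMetric (fun r => ENNReal.ofReal (g r.toReal))

/-- Membership in the class `𝒟`: `log (g₁ r) / log r` has a limit as `r → 0⁺`
(equivalently, its liminf and limsup at `0⁺` coincide). -/
def MemD (g : ℝ → ℝ) : Prop :=
  ∃ γ : ℝ, Tendsto (fun r => Real.log (gOne g r) / Real.log r) (𝓝[>] (0:ℝ)) (𝓝 γ)

/-- The class `𝒟₁ = 𝒟 ∩ 𝔇₁`. -/
def MemD1 (g : ℝ → ℝ) : Prop := MemD g ∧ IsGauge1 g

/-! ### Net measures and classes of sets with large intersection -/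

/-- The `c`-adic interval `c^{-j} (k + [0,1))`. -/
def cadicInt (c : ℕ) (j k : ℤ) : Set ℝ :=
  Ico ((k : ℝ) * (c:ℝ) ^ (-j)) (((k : ℝ) + 1) * (c:ℝ) ^ (-j))

/-- `ε_g`: the supremum of the `ε ∈ (0,1]` such that `g` is nondecreasing on `[0,ε]`
and `g r / r` is nonincreasing on `(0,ε]`. -/
def epsGauge (g : ℝ → ℝ) : ℝ :=
  sSup {ε : ℝ | ε ∈ Ioc (0:ℝ) 1 ∧ MonotoneOn g (Icc 0 ε) ∧
    AntitoneOn (fun r => g r / r) (Ioc 0 ε)}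

/-- The set coded by an element of `Option (ℤ × ℤ)`: either the empty set, or a
`c`-adic interval. -/
def netSet (c : ℕ) : Option (ℤ × ℤ) → Set ℝ
  | none => ∅
  | some (j, k) => cadicInt c j k

/-- The weight `g (diam λ)` of a coded `c`-adic interval. -/
def netWeight (c : ℕ) (g : ℝ → ℝ) : Option (ℤ × ℤ) → ℝ≥0∞
  | none => 0
  | some (j, _) => ENNReal.ofReal (g ((c:ℝ) ^ (-j)))

/-- The outer net measure `M^g_∞` built from coverings by `c`-adic intervals of
diameter less than `ε_g` (and the empty set). -/
def netMeasure (c : ℕ) (g : ℝ → ℝ) (F : Set ℝ) : ℝ≥0∞ :=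
  ⨅ (f : ℕ → Option (ℤ × ℤ))
    (_ : ∀ p j k, f p = some (j, k) → (c:ℝ) ^ (-j) < epsGauge g)
    (_ : F ⊆ ⋃ p, netSet c (f p)),
      ∑' p, netWeight c g (f p)

/-- The class `G^g(V)` of subsets of `ℝ` with large intersection in `V` with
respect to `g`: the `G_δ`-sets `F` such that `M^{ḡ}_∞(F ∩ U) = M^{ḡ}_∞(U)` for every
`ḡ ∈ 𝔇₁` with `ḡ ≺ g` and every open `U ⊆ V`. -/
def largeIntersection (g : ℝ → ℝ) (V : Set ℝ) : Set (Set ℝ) :=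
  {F | IsGδ F ∧ ∀ gb : ℝ → ℝ, IsGauge1 gb → GaugePrec gb g →
    ∀ U : Set ℝ, IsOpen U → U ⊆ V → netMeasure 2 gb (F ∩ U) = netMeasure 2 gb U}

/-! ### Lévy processes -/

variable {d : ℕ}

/-- `X` is a `d`-dimensional Lévy process on the probability space `(Ω, P)`, with
generating triplet `(a, Q, π)` (drift, positive semidefinite quadratic form given by the
symmetric bilinear map `Q`, and Lévy measure `π`). -/
structure IsLevyProcess {Ω : Type*} [MeasurableSpace Ω] (P : Measure Ω)
    (X : ℝ → Ω → (Fin d → ℝ)) (a : Fin d → ℝ) (Q : (Fin d → ℝ) → (Fin d → ℝ) → ℝ)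
    (π : Measure (Fin d → ℝ)) : Prop where
  isProb : IsProbabilityMeasure P
  meas : ∀ t, Measurable (X t)
  init : ∀ ω, X 0 ω = 0
  stationary : ∀ s t : ℝ, 0 ≤ s → s ≤ t →
    P.map (fun ω => X t ω - X s ω) = P.map (X (t - s))
  indepIncrements : ∀ (n : ℕ) (t : ℕ → ℝ), 0 ≤ t 0 → Monotone t →
    ProbabilityTheory.iIndepFun
      (fun i ω => X (t (i + 1)) ω - X (t i) ω) P
  cadlag : ∀ᵐ ω ∂P,
    (∀ t : ℝ, 0 ≤ t → ContinuousWithinAt (fun u => X u ω) (Ici t) t) ∧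
    (∀ t : ℝ, 0 < t → ∃ L, Tendsto (fun u => X u ω) (𝓝[<] t) (𝓝 L))
  Q_symm : ∀ x y, Q x y = Q y x
  Q_add : ∀ x x' y, Q (x + x') y = Q x y + Q x' y
  Q_smul : ∀ (c : ℝ) (x y), Q (c • x) y = c * Q x y
  Q_nonneg : ∀ x, 0 ≤ Q x x
  levyMeasure_zero : π {0} = 0
  levyMeasure_finite : ∫⁻ x, ENNReal.ofReal (min 1 (‖x‖ ^ 2)) ∂π < ∞
  levyKhintchine : ∀ t : ℝ, 0 ≤ t → ∀ lam : Fin d → ℝ,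
    ∫ ω, Complex.exp (Complex.I * ((∑ i, lam i * X t ω i : ℝ) : ℂ)) ∂P
      = Complex.exp (-(t : ℂ) *
          (Complex.I * ((∑ i, a i * lam i : ℝ) : ℂ) + ((Q lam lam : ℝ) : ℂ) / 2
            + ∫ x, (1 - Complex.exp (Complex.I * ((∑ i, lam i * x i : ℝ) : ℂ))
                + Complex.I * ((∑ i, lam i * x i : ℝ) : ℂ)
                  * ((if ‖x‖ < 1 then (1:ℝ) else 0) : ℂ)) ∂π))

variable {Ω : Type*} [MeasurableSpace Ω]

/-- The jump `ΔX_t = X_t - X_{t⁻}` of the path of `X` under `ω` at time `t`. -/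
def jump (X : ℝ → Ω → (Fin d → ℝ)) (ω : Ω) (t : ℝ) : Fin d → ℝ :=
  X t ω - Function.leftLim (fun u => X u ω) t

/-- The set `S` of jump times. -/
def jumpTimes (X : ℝ → Ω → (Fin d → ℝ)) (ω : Ω) : Set ℝ :=
  {t | 0 < t ∧ jump X ω t ≠ 0}

/-- The set `S₁` of times of jumps of size at most `1`. -/
def smallJumpTimes (X : ℝ → Ω → (Fin d → ℝ)) (ω : Ω) : Set ℝ :=
  {t | t ∈ jumpTimes X ω ∧ ‖jump X ω t‖ ≤ 1}

/-- The measure `σ`, image of the Lévy measure `π` under `x ↦ ‖x‖`. -/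
def sigmaOf (π : Measure (Fin d → ℝ)) : Measure ℝ := π.map fun x => ‖x‖

/-- `c_j = σ((2^{-j-1}, 2^{-j}])`. -/
def cSeq (π : Measure (Fin d → ℝ)) (j : ℕ) : ℝ :=
  (sigmaOf π (Ioc ((2:ℝ) ^ (-(j:ℤ) - 1)) ((2:ℝ) ^ (-(j:ℤ))))).toReal

/-- Condition (C): `Σ_j 2^{-j} √(c_j log(1 + c_j)) < ∞`. -/
def ConditionC (π : Measure (Fin d → ℝ)) : Prop :=
  Summable fun j : ℕ =>
    (2:ℝ) ^ (-(j:ℝ)) * Real.sqrt (cSeq π j * Real.log (1 + cSeq π j))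

/-- The Blumenthal–Getoor exponent `β`. -/
def betaIndex (π : Measure (Fin d → ℝ)) : ℝ :=
  sInf {γ : ℝ | 0 ≤ γ ∧
    ∫⁻ r in Ioc (0:ℝ) 1, ENNReal.ofReal (r ^ γ) ∂(sigmaOf π) < ∞}

/-- The exponent `β′`: `β` if the Gaussian part vanishes, `2` otherwise. -/
def betaPrime (π : Measure (Fin d → ℝ)) (Q : (Fin d → ℝ) → (Fin d → ℝ) → ℝ) : ℝ :=
  if ∀ x, Q x x = 0 then betaIndex π else 2

/-- The Hölder exponent of `f : ℝ → ℝ^d` at `t` (restricted to nonnegative times),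
with values in `[0,∞]`. -/
def holderExp (f : ℝ → (Fin d → ℝ)) (t : ℝ) : ℝ≥0∞ :=
  sSup {H : ℝ≥0∞ | ∃ h : ℝ, 0 < h ∧ H = ENNReal.ofReal h ∧
    ∃ c > 0, ∃ P : Fin d → Polynomial ℝ, ∃ δ > 0, ∀ t' : ℝ, 0 ≤ t' → |t' - t| ≤ δ →
      ‖f t' - fun i => (P i).eval (t' - t)‖ ≤ c * |t' - t| ^ h}

/-- The iso-Hölder set `E_h = {t ≥ 0 : h_X(t) = h}`. -/
def Eset (X : ℝ → Ω → (Fin d → ℝ)) (ω : Ω) (h : ℝ≥0∞) : Set ℝ :=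
  {t | 0 ≤ t ∧ holderExp (fun u => X u ω) t = h}

/-- The singularity set `Ẽ_h = {t ∈ [0,∞) ∖ S : h_X(t) ≤ h}`. -/
def tildeEset (X : ℝ → Ω → (Fin d → ℝ)) (ω : Ω) (h : ℝ≥0∞) : Set ℝ :=
  {t | 0 ≤ t ∧ t ∉ jumpTimes X ω ∧ holderExp (fun u => X u ω) t ≤ h}

/-- The set `L_φ` of points approximated at rate `φ` by the jump times in `S₁`. -/
def Lset (X : ℝ → Ω → (Fin d → ℝ)) (ω : Ω) (φ : ℝ → ℝ) : Set ℝ :=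
  {t | 0 ≤ t ∧ {s | s ∈ smallJumpTimes X ω ∧ |t - s| < φ (‖jump X ω s‖)}.Infinite}

/-- `h_g` computed directly from `g`:
`inf {h > 0 : ∫_{(0,ε]} g(r^{1/h}) σ(dr) = ∞ for all small enough ε}` (with `inf ∅ = ∞`). -/
def hGaugeRaw (σ : Measure ℝ) (g : ℝ → ℝ) : ℝ≥0∞ :=
  sInf {H : ℝ≥0∞ | ∃ h : ℝ, 0 < h ∧ H = ENNReal.ofReal h ∧
    ∃ ε₀ > 0, ∀ ε : ℝ, 0 < ε → ε ≤ ε₀ →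
      ∫⁻ r in Ioc (0:ℝ) ε, ENNReal.ofReal (g (r ^ (1 / h))) ∂σ = ∞}

/-- `h_g`, computed from `g₁` as in the paper. -/
def hGauge (σ : Measure ℝ) (g : ℝ → ℝ) : ℝ≥0∞ := hGaugeRaw σ (gOne g)

/-- The class `𝔚` of moduli of continuity. -/
def IsModulus (w : ℝ → ℝ) : Prop :=
  w 0 = 0 ∧ (∃ ε > 0, StrictMonoOn w (Icc (0:ℝ) ε) ∧ ContinuousOn w (Icc (0:ℝ) ε)) ∧
  (∃ c : ℝ, 1 < c ∧ ∀ᶠ δ in 𝓝[>] (0:ℝ), c * w δ ≤ w (2 * δ)) ∧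
  (∃ C : ℝ, ∀ᶠ δ in 𝓝[>] (0:ℝ), w (2 * δ) ≤ C * w δ)

/-- `w` is a modulus of continuity of `X(ω)` at time `t`. -/
def IsPtwiseModulusAt (X : ℝ → Ω → (Fin d → ℝ)) (ω : Ω) (w : ℝ → ℝ) (t : ℝ) : Prop :=
  ∃ c > 0, ∃ P : Fin d → Polynomial ℝ, ∃ δ > 0, ∀ t' : ℝ, 0 ≤ t' → |t' - t| ≤ δ →
    ‖X t' ω - fun i => (P i).eval (t' - t)‖ ≤ c * w |t' - t|

/-- `F_w`: the set of nonnegative non-jump times at which `w` is not a modulus of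
continuity of `X`. -/
def badModulusSet (X : ℝ → Ω → (Fin d → ℝ)) (ω : Ω) (w : ℝ → ℝ) : Set ℝ :=
  {t | 0 ≤ t ∧ t ∉ jumpTimes X ω ∧ ¬ IsPtwiseModulusAt X ω w t}


/-! ### Auxiliary material for `exists_slower_gauge_same_exponent` -/

private lemma measurable_rpow_const' (c : ℝ) : Measurable fun r : ℝ => r ^ c := by
  measurability

private lemma iUnion_annuli {T : ℕ → ℝ} (hpos : ∀ k, 0 < T k) (hanti : Antitone T)
    (hlim : ∀ r : ℝ, 0 < r → ∃ k, T k < r) :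
    (⋃ k, Ioc (T (k + 1)) (T k)) = Ioc 0 (T 0) := by
  ext r
  simp only [mem_iUnion, mem_Ioc]
  constructor
  · rintro ⟨k, h1, h2⟩
    exact ⟨(hpos (k + 1)).trans h1, h2.trans (hanti (Nat.zero_le k))⟩
  · rintro ⟨h1, h2⟩
    have hex : ∃ k, T k < r := hlim r h1
    have hK : T (Nat.find hex) < r := Nat.find_spec hex
    have hKne : Nat.find hex ≠ 0 := by
      intro h0
      rw [h0] at hK
      exact absurd hK (not_lt.mpr h2)
    obtain ⟨k, hk⟩ := Nat.exists_eq_succ_of_ne_zero hKne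
    refine ⟨k, ?_, ?_⟩
    · have := hK; rw [hk] at this; exact this
    · have hlt : k < Nat.find hex := by rw [hk]; exact Nat.lt_succ_self k
      exact not_lt.mp (Nat.find_min hex hlt)


/-- **Construction of a slower gauge function with the same critical exponent.**
For any Borel measure `σ` on `(0,∞)` and any `u ∈ 𝔇₁` with `h_u < ∞`, there is
`ū ∈ 𝔇₁` with `ū ≺ u` and `h_ū = h_u`. -/
theorem exists_slower_gauge_same_exponent
    (σ : Measure ℝ) (hσ : σ (Iic (0:ℝ)) = 0)
    (u : ℝ → ℝ) (hu : IsGauge1 u) (hufin : hGaugeRaw σ u < ∞) :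
    ∃ ub : ℝ → ℝ, IsGauge1 ub ∧ GaugePrec ub u ∧ hGaugeRaw σ ub = hGaugeRaw σ u := by
  classical
  obtain ⟨⟨hu0, hulim, εm, hεm, humono0⟩, ε₁, hε₁, hupos0, huanti0⟩ := hu
  set E : ℝ := min εm (min ε₁ 1) with hEdef
  have hE0 : 0 < E := lt_min hεm (lt_min hε₁ one_pos)
  have hE1 : E ≤ 1 := (min_le_right _ _).trans (min_le_right _ _)
  have hEε₁ : E ≤ ε₁ := (min_le_right _ _).trans (min_le_left _ _)
  have humono : MonotoneOn u (Icc 0 E) :=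
    humono0.mono (Icc_subset_Icc_right (min_le_left _ _))
  have hupos : ∀ r ∈ Ioc (0:ℝ) E, 0 < u r := by
    intro r hr
    have h1 : 0 < u r / r := hupos0 r ⟨hr.1, hr.2.trans hEε₁⟩
    have := mul_pos h1 hr.1
    rwa [div_mul_cancel₀ _ hr.1.ne'] at this
  have huanti : AntitoneOn (fun r => u r / r) (Ioc (0:ℝ) E) :=
    huanti0.mono (Ioc_subset_Ioc_right hEε₁)
  have hunn : ∀ r ∈ Icc (0:ℝ) E, 0 ≤ u r := by
    intro r hr
    rcases eq_or_lt_of_le hr.1 with h | h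
    · rw [← h, hu0]
    · exact (hupos r ⟨h, hr.2⟩).le
  -- the monotone measurable surrogate `v` of `u`
  set v : ℝ → ℝ := fun x => u (max 0 (min x E)) with hvdef
  have hclamp_mem : ∀ x : ℝ, max 0 (min x E) ∈ Icc (0:ℝ) E :=
    fun x => ⟨le_max_left _ _, max_le hE0.le (min_le_right _ _)⟩
  have hvmono : Monotone v := by
    intro x y hxy
    exact humono (hclamp_mem x) (hclamp_mem y)
      (max_le_max le_rfl (min_le_min hxy le_rfl))
  have hvmeas : Measurable v := hvmono.measurable
  have hveq : ∀ x ∈ Icc (0:ℝ) E, v x = u x := by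
    intro x hx
    simp only [hvdef]
    rw [min_eq_left hx.2, max_eq_right hx.1]
  have hvnn : ∀ x, 0 ≤ v x := fun x => hunn _ (hclamp_mem x)
  -- the auxiliary integrals
  set J : ℚ → ℝ → ℝ≥0∞ :=
    fun q ε => ∫⁻ r in Ioc (0:ℝ) ε, ENNReal.ofReal (v (r ^ (1 / (q:ℝ)))) ∂σ with hJdef
  set F : ℚ → Prop := fun q =>
    0 < (q:ℝ) ∧ ∃ ε : ℝ, 0 < ε ∧ ε ≤ min 1 (E ^ (q:ℝ)) ∧ J q ε < ∞ with hFdef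
  -- small tails
  have tail : ∀ q : ℚ, F q → ∀ δ : ℝ, 0 < δ → ∀ b : ℝ, 0 < b →
      ∃ t : ℝ, 0 < t ∧ t ≤ b ∧ J q t ≤ ENNReal.ofReal δ := by
    rintro q ⟨hq0, ε₀, hε₀, hε₀le, hfin⟩ δ hδ b hb
    set f : ℝ → ℝ≥0∞ := fun r => ENNReal.ofReal (v (r ^ (1 / (q:ℝ)))) with hfdef
    have hfmeas : Measurable f :=
      (hvmeas.comp (measurable_rpow_const' (1 / (q:ℝ)))).ennreal_ofReal
    set a : ℝ := min b ε₀ with hadef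
    have ha : 0 < a := lt_min hb hε₀
    set s : ℕ → Set ℝ := fun n => Ioc (0:ℝ) (a * (2:ℝ)⁻¹ ^ n) with hsdef
    have hsm : ∀ n, MeasurableSet (s n) := fun n => measurableSet_Ioc
    have hanti : Antitone s := by
      intro n m hnm
      exact Ioc_subset_Ioc_right (mul_le_mul_of_nonneg_left
        (pow_le_pow_of_le_one (by norm_num) (by norm_num) hnm) ha.le)
    have hinter : (⋂ n, s n) = ∅ := by
      refine eq_empty_iff_forall_notMem.mpr fun r hr => ?_
      have hr0 : 0 < r := (mem_iInter.mp hr 0).1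
      obtain ⟨n, hn⟩ := exists_pow_lt_of_lt_one (div_pos hr0 ha) (by norm_num : (2:ℝ)⁻¹ < 1)
      exact absurd (mem_iInter.mp hr n).2 (not_le.mpr ((lt_div_iff₀' ha).mp hn))
    have hfin0 : σ.withDensity f (s 0) ≠ ∞ := by
      rw [withDensity_apply f (hsm 0)]
      refine ne_of_lt (lt_of_le_of_lt (lintegral_mono_set (Ioc_subset_Ioc_right ?_)) hfin)
      simp only [hsdef, pow_zero, mul_one]
      exact min_le_right _ _
    have key := tendsto_measure_iInter_atTop (μ := σ.withDensity f)
      (fun n => (hsm n).nullMeasurableSet) hanti ⟨0, hfin0⟩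
    rw [hinter, measure_empty] at key
    have hev := key.eventually (Iio_mem_nhds (ENNReal.ofReal_pos.mpr hδ))
    obtain ⟨n, hn⟩ := hev.exists
    refine ⟨a * (2:ℝ)⁻¹ ^ n, by positivity, ?_, ?_⟩
    · calc a * (2:ℝ)⁻¹ ^ n ≤ a * 1 := by
            refine mul_le_mul_of_nonneg_left (pow_le_one₀ (by norm_num) (by norm_num)) ha.le
        _ = a := mul_one a
        _ ≤ b := min_le_left _ _
    · have hn' : σ.withDensity f (s n) < ENNReal.ofReal δ := hn
      rw [withDensity_apply f (hsm n)] at hn'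
      exact hn'.le
  -- choose the scales `t`
  have exT : ∀ (q : ℚ) (k : ℕ), ∃ t : ℝ, 0 < t ∧ (F q →
      t ≤ min 1 (E ^ (q:ℝ)) * (2:ℝ)⁻¹ ^ k ∧
      J q t ≤ ENNReal.ofReal ((2:ℝ)⁻¹ ^ k / ((Encodable.encode (q, k) : ℝ) + 2))) := by
    intro q k
    by_cases hq : F q
    · have hb : 0 < min 1 (E ^ (q:ℝ)) * (2:ℝ)⁻¹ ^ k := by
        have := Real.rpow_pos_of_pos hE0 (q:ℝ)
        positivity
      have hδ : 0 < (2:ℝ)⁻¹ ^ k / ((Encodable.encode (q, k) : ℝ) + 2) := by positivity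
      obtain ⟨t, h1, h2, h3⟩ := tail q hq _ hδ _ hb
      exact ⟨t, h1, fun _ => ⟨h2, h3⟩⟩
    · exact ⟨1, one_pos, fun h => absurd h hq⟩
  choose t ht0 htp using exT
  set T : ℚ → ℕ → ℝ :=
    fun q k => (Finset.range (k + 1)).inf'
      (Finset.nonempty_range_iff.mpr (Nat.succ_ne_zero k)) (t q) with hTdef
  have hTle : ∀ q k i, i ≤ k → T q k ≤ t q i :=
    fun q k i h => Finset.inf'_le _ (Finset.mem_range.mpr (Nat.lt_succ_of_le h))
  have hT0 : ∀ q k, 0 < T q k :=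
    fun q k => (Finset.lt_inf'_iff _).mpr fun i _ => ht0 q i
  have hTanti : ∀ q k, T q (k + 1) ≤ T q k :=
    fun q k => Finset.le_inf' _ _ fun i hi =>
      hTle q (k + 1) i (Nat.le_succ_of_le (Nat.lt_succ_iff.mp (Finset.mem_range.mp hi)))
  have hTb : ∀ q k, F q → T q k ≤ min 1 (E ^ (q:ℝ)) * (2:ℝ)⁻¹ ^ k :=
    fun q k hq => (hTle q k k le_rfl).trans (htp q k hq).1
  have hTsmall : ∀ q k, F q → T q k ≤ min 1 (E ^ (q:ℝ)) := by
    intro q k hq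
    refine (hTb q k hq).trans ?_
    refine mul_le_of_le_one_right ?_ (pow_le_one₀ (by norm_num) (by norm_num))
    have := Real.rpow_pos_of_pos hE0 (q:ℝ)
    positivity
  have hTJ : ∀ q k, F q → J q (T q k) ≤
      ENNReal.ofReal ((2:ℝ)⁻¹ ^ k / ((Encodable.encode (q, k) : ℝ) + 2)) :=
    fun q k hq => le_trans
      (lintegral_mono_set (Ioc_subset_Ioc_right (hTle q k k le_rfl))) (htp q k hq).2
  set A : ℚ → ℕ → Set ℝ := fun q k => Ioc (T q (k + 1)) (T q k) with hAdef
  have hAsub : ∀ q k, A q k ⊆ Ioc 0 (T q k) :=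
    fun q k => Ioc_subset_Ioc_left (hT0 q (k + 1)).le
  -- rpow bound for points below the scales
  have hrpowE : ∀ (q : ℚ) (p : ℝ), F q → 0 < p → p ≤ min 1 (E ^ (q:ℝ)) →
      p ^ (1 / (q:ℝ)) ∈ Ioc (0:ℝ) E := by
    intro q p hq hp0 hple
    refine ⟨Real.rpow_pos_of_pos hp0 _, ?_⟩
    have h1 : p ^ (1 / (q:ℝ)) ≤ (E ^ (q:ℝ)) ^ (1 / (q:ℝ)) :=
      Real.rpow_le_rpow hp0.le (hple.trans (min_le_right _ _)) (one_div_nonneg.mpr hq.1.le)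
    rwa [← Real.rpow_mul hE0.le, mul_one_div_cancel hq.1.ne', Real.rpow_one] at h1
  -- finiteness of annuli measures
  have hAfin : ∀ q k, F q → σ (A q k) < ∞ := by
    intro q k hq
    rcases le_or_gt (T q k) (T q (k + 1)) with h | h
    · have : A q k = ∅ := Ioc_eq_empty (not_lt.mpr h)
      rw [this]
      simp
    · have hp0 : 0 < T q (k + 1) := hT0 q (k + 1)
      have hparg : (T q (k + 1)) ^ (1 / (q:ℝ)) ∈ Ioc (0:ℝ) E :=
        hrpowE q _ hq hp0 ((hTanti q k).trans (hTsmall q k hq))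
      have hcpos : 0 < u ((T q (k + 1)) ^ (1 / (q:ℝ))) := hupos _ hparg
      by_contra hcon
      rw [not_lt, top_le_iff] at hcon
      have h1 : ENNReal.ofReal (u ((T q (k + 1)) ^ (1 / (q:ℝ)))) * σ (A q k) ≤
          J q (T q k) := by
        rw [← setLIntegral_const]
        refine le_trans (lintegral_mono_ae
          (ae_restrict_of_forall_mem measurableSet_Ioc ?_))
          (lintegral_mono_set (hAsub q k))
        intro r hr
        apply ENNReal.ofReal_le_ofReal
        have harg : (T q (k + 1)) ^ (1 / (q:ℝ)) ≤ r ^ (1 / (q:ℝ)) :=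
          Real.rpow_le_rpow hp0.le hr.1.le (one_div_nonneg.mpr hq.1.le)
        calc u ((T q (k + 1)) ^ (1 / (q:ℝ)))
            = v ((T q (k + 1)) ^ (1 / (q:ℝ))) := (hveq _ (Ioc_subset_Icc_self hparg)).symm
          _ ≤ v (r ^ (1 / (q:ℝ))) := hvmono harg
      rw [hcon, ENNReal.mul_top (ENNReal.ofReal_pos.mpr hcpos).ne'] at h1
      have h2 : J q (T q k) < ∞ := (hTJ q k hq).trans_lt ENNReal.ofReal_lt_top
      rw [top_le_iff.mp h1] at h2
      exact absurd h2 (by simp)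
  set D : ℚ → ℕ → ℝ := fun q k => (σ (A q k)).toReal with hDdef
  have hD0 : ∀ q k, 0 ≤ D q k := fun q k => ENNReal.toReal_nonneg
  -- the sequence of constants
  set bs : ℕ → ℝ := fun m =>
    Option.elim (Encodable.decode (α := ℚ × ℕ) m) 1
      (fun p => if F p.1 then min 1 ((2:ℝ)⁻¹ ^ p.2 / (D p.1 p.2 + 1)) else 1) with hbsdef
  have hbs0 : ∀ m, 0 < bs m := by
    intro m
    simp only [hbsdef]
    cases hd : Encodable.decode (α := ℚ × ℕ) m with
    | none => norm_num
    | some p =>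
        simp only [Option.elim]
        split
        · exact lt_min one_pos (div_pos (by positivity) (by linarith [hD0 p.1 p.2]))
        · exact one_pos
  have hbs1 : ∀ m, bs m ≤ 1 := by
    intro m
    simp only [hbsdef]
    cases hd : Encodable.decode (α := ℚ × ℕ) m with
    | none => norm_num
    | some p =>
        simp only [Option.elim]
        split
        · exact min_le_left _ _
        · exact le_rfl
  set c : ℕ → ℝ := fun n => (2:ℝ)⁻¹ ^ n * ∏ m ∈ Finset.range (n + 1), bs m with hcdef
  have hc0 : ∀ n, 0 < c n :=
    fun n => mul_pos (by positivity) (Finset.prod_pos fun m _ => hbs0 m)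
  have hcle : ∀ n, c n ≤ (2:ℝ)⁻¹ ^ n :=
    fun n => mul_le_of_le_one_right (by positivity)
      (Finset.prod_le_one (fun m _ => (hbs0 m).le) (fun m _ => hbs1 m))
  have hcb : ∀ n m, m ≤ n → c n ≤ bs m := by
    intro n m hmn
    have hmem : m ∈ Finset.range (n + 1) := Finset.mem_range.mpr (Nat.lt_succ_of_le hmn)
    have h1 : c n ≤ ∏ m ∈ Finset.range (n + 1), bs m := by
      refine mul_le_of_le_one_left (Finset.prod_nonneg fun m _ => (hbs0 m).le) ?_
      exact pow_le_one₀ (by norm_num) (by norm_num)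
    refine h1.trans ?_
    rw [← Finset.mul_prod_erase _ bs hmem]
    refine mul_le_of_le_one_right (hbs0 m).le ?_
    exact Finset.prod_le_one (fun i _ => (hbs0 i).le) (fun i _ => hbs1 i)
  have hckey : ∀ (q : ℚ) (k : ℕ), F q →
      c (Encodable.encode (q, k)) ≤ (2:ℝ)⁻¹ ^ k / (D q k + 1) := by
    intro q k hq
    have h1 := hcb (Encodable.encode (q, k)) (Encodable.encode (q, k)) le_rfl
    have h2 : bs (Encodable.encode (q, k)) = min 1 ((2:ℝ)⁻¹ ^ k / (D q k + 1)) := by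
      simp only [hbsdef, Encodable.encodek, Option.elim, if_pos hq]
    rw [h2] at h1
    exact h1.trans (min_le_right _ _)
  -- the new gauge function
  set ub : ℝ → ℝ := fun r => ⨅ n : ℕ, max (((n:ℝ) + 1) * v r) (c n) with hubdef
  have hbdd : ∀ r, BddBelow (Set.range fun n : ℕ => max (((n:ℝ) + 1) * v r) (c n)) := by
    intro r
    refine ⟨0, ?_⟩
    rintro x ⟨n, rfl⟩
    exact le_max_of_le_left (mul_nonneg (by positivity) (hvnn r))
  have hub_le : ∀ r (n : ℕ), ub r ≤ max (((n:ℝ) + 1) * v r) (c n) :=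
    fun r n => ciInf_le (hbdd r) n
  have hub_ge : ∀ r (a : ℝ), (∀ n : ℕ, a ≤ max (((n:ℝ) + 1) * v r) (c n)) → a ≤ ub r :=
    fun r a h => le_ciInf h
  have hubnn : ∀ r, 0 ≤ ub r :=
    fun r => hub_ge r 0 fun n => le_max_of_le_left (mul_nonneg (by positivity) (hvnn r))
  have hub_ge_u : ∀ r ∈ Icc (0:ℝ) E, u r ≤ ub r := by
    intro r hr
    refine hub_ge r (u r) fun n => ?_
    rw [hveq r hr]
    exact le_max_of_le_left (le_mul_of_one_le_left (hunn r hr) (by norm_num))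
  have hubmono : Monotone ub := by
    intro x y hxy
    refine le_ciInf fun n => (hub_le x n).trans ?_
    exact max_le_max (mul_le_mul_of_nonneg_left (hvmono hxy) (by positivity)) le_rfl
  have hc_tend : Tendsto c atTop (𝓝 0) :=
    squeeze_zero (fun n => (hc0 n).le) hcle
      (tendsto_pow_atTop_nhds_zero_of_lt_one (by norm_num) (by norm_num))
  have hv0 : v 0 = 0 := by rw [hveq 0 ⟨le_rfl, hE0.le⟩]; exact hu0
  have hub0 : ub 0 = 0 := by
    refine le_antisymm ?_ (hubnn 0)
    have h1 : ∀ n : ℕ, ub 0 ≤ c n := by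
      intro n
      refine (hub_le 0 n).trans_eq ?_
      rw [hv0, mul_zero, max_eq_right (hc0 n).le]
    exact ge_of_tendsto hc_tend (Eventually.of_forall h1)
  have hmemIoc : Ioc (0:ℝ) E ∈ 𝓝[>] (0:ℝ) := Ioc_mem_nhdsGT_of_mem ⟨le_rfl, hE0⟩
  have hub_tend : Tendsto ub (𝓝[>] (0:ℝ)) (𝓝 0) := by
    refine tendsto_order.2 ⟨fun a ha => Eventually.of_forall fun r => ha.trans_le (hubnn r),
      fun a ha => ?_⟩
    obtain ⟨n, hn⟩ := exists_pow_lt_of_lt_one ha (by norm_num : (2:ℝ)⁻¹ < 1)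
    have hcn : c n < a := (hcle n).trans_lt hn
    have h2 : ∀ᶠ r in 𝓝[>] (0:ℝ), u r < a / ((n:ℝ) + 1) :=
      hulim.eventually (gt_mem_nhds (by positivity))
    filter_upwards [h2, hmemIoc] with r hr1 hr2
    refine lt_of_le_of_lt (hub_le r n) (max_lt ?_ hcn)
    rw [hveq r (Ioc_subset_Icc_self hr2)]
    rw [lt_div_iff₀ (by positivity : (0:ℝ) < (n:ℝ) + 1)] at hr1
    linarith
  have hubpos : ∀ r ∈ Ioc (0:ℝ) E, 0 < ub r :=
    fun r hr => lt_of_lt_of_le (hupos r hr) (hub_ge_u r (Ioc_subset_Icc_self hr))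
  have hub_anti_div : AntitoneOn (fun r => ub r / r) (Ioc (0:ℝ) E) := by
    rintro r hr s hs hrs
    simp only
    rw [div_le_div_iff₀ hs.1 hr.1]
    have key : ∀ n : ℕ, ub s * r / s ≤ max (((n:ℝ) + 1) * v r) (c n) := by
      intro n
      rw [div_le_iff₀ hs.1]
      calc ub s * r ≤ max (((n:ℝ) + 1) * v s) (c n) * r :=
            mul_le_mul_of_nonneg_right (hub_le s n) hr.1.le
        _ ≤ max (((n:ℝ) + 1) * v r) (c n) * s := by
            rw [max_mul_of_nonneg _ _ hr.1.le, max_mul_of_nonneg _ _ hs.1.le]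
            refine max_le_max ?_ (mul_le_mul_of_nonneg_left hrs (hc0 n).le)
            rw [hveq r (Ioc_subset_Icc_self hr), hveq s (Ioc_subset_Icc_self hs)]
            have h1 : u s * r ≤ u r * s := by
              have h2 := huanti hr hs hrs
              simp only at h2
              rw [div_le_div_iff₀ hs.1 hr.1] at h2
              linarith
            calc ((n:ℝ) + 1) * u s * r = ((n:ℝ) + 1) * (u s * r) := by ring
              _ ≤ ((n:ℝ) + 1) * (u r * s) := mul_le_mul_of_nonneg_left h1 (by positivity)
              _ = ((n:ℝ) + 1) * u r * s := by ring
    have h3 : ub s * r / s ≤ ub r := le_ciInf key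
    rwa [div_le_iff₀ hs.1] at h3
  have hub_anti_u : AntitoneOn (fun r => ub r / u r) (Ioc (0:ℝ) E) := by
    rintro r hr s hs hrs
    simp only
    rw [div_le_div_iff₀ (hupos s hs) (hupos r hr)]
    have key : ∀ n : ℕ, ub s * u r / u s ≤ max (((n:ℝ) + 1) * v r) (c n) := by
      intro n
      rw [div_le_iff₀ (hupos s hs)]
      calc ub s * u r ≤ max (((n:ℝ) + 1) * v s) (c n) * u r :=
            mul_le_mul_of_nonneg_right (hub_le s n) (hunn r (Ioc_subset_Icc_self hr))
        _ ≤ max (((n:ℝ) + 1) * v r) (c n) * u s := by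
            rw [max_mul_of_nonneg _ _ (hunn r (Ioc_subset_Icc_self hr)),
              max_mul_of_nonneg _ _ (hunn s (Ioc_subset_Icc_self hs))]
            refine max_le_max ?_ (mul_le_mul_of_nonneg_left
              (humono (Ioc_subset_Icc_self hr) (Ioc_subset_Icc_self hs) hrs) (hc0 n).le)
            rw [hveq r (Ioc_subset_Icc_self hr), hveq s (Ioc_subset_Icc_self hs)]
            exact le_of_eq (by ring)
    have h3 : ub s * u r / u s ≤ ub r := le_ciInf key
    rwa [div_le_iff₀ (hupos s hs)] at h3
  have hub_div_tend : Tendsto (fun r => ub r / u r) (𝓝[>] (0:ℝ)) atTop := by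
    rw [tendsto_atTop]
    intro b
    obtain ⟨N, hN⟩ := exists_nat_ge b
    set m0 : ℝ := (Finset.range (N + 1)).inf'
      (Finset.nonempty_range_iff.mpr (Nat.succ_ne_zero N)) c with hm0def
    have hm0 : 0 < m0 := (Finset.lt_inf'_iff _).mpr fun i _ => hc0 i
    have h2 : ∀ᶠ r in 𝓝[>] (0:ℝ), u r < m0 / ((N:ℝ) + 1) :=
      hulim.eventually (gt_mem_nhds (by positivity))
    filter_upwards [h2, hmemIoc] with r hr1 hr2
    rw [le_div_iff₀ (hupos r hr2)]
    refine hub_ge r (b * u r) fun n => ?_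
    rw [hveq r (Ioc_subset_Icc_self hr2)]
    have hurnn : 0 ≤ u r := hunn r (Ioc_subset_Icc_self hr2)
    rcases le_or_gt ((N:ℝ)) ((n:ℝ) + 1) with h | h
    · refine le_max_of_le_left ?_
      exact mul_le_mul_of_nonneg_right (hN.trans h) hurnn
    · refine le_max_of_le_right ?_
      have hn : n ∈ Finset.range (N + 1) := by
        refine Finset.mem_range.mpr ?_
        have hnN : (n:ℝ) < (N:ℝ) := by linarith
        have := Nat.cast_lt (α := ℝ) |>.mp hnN
        omega
      have hm0le : m0 ≤ c n := Finset.inf'_le _ hn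
      rw [lt_div_iff₀ (by positivity : (0:ℝ) < (N:ℝ) + 1)] at hr1
      calc b * u r ≤ (N:ℝ) * u r := mul_le_mul_of_nonneg_right hN hurnn
        _ ≤ ((N:ℝ) + 1) * u r := mul_le_mul_of_nonneg_right (by linarith) hurnn
        _ = u r * ((N:ℝ) + 1) := by ring
        _ ≤ m0 := hr1.le
        _ ≤ c n := hm0le
  have hub_gauge1 : IsGauge1 ub :=
    ⟨⟨hub0, hub_tend, E, hE0, hubmono.monotoneOn _⟩, E, hE0,
      fun r hr => div_pos (hubpos r hr) hr.1, hub_anti_div⟩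
  have hub_prec : GaugePrec ub u := ⟨E, hE0, hub_anti_u, hub_div_tend⟩
  -- main finiteness estimate
  have main : ∀ q : ℚ, F q → ∀ h : ℝ, 0 < h → h ≤ (q:ℝ) →
      (∫⁻ r in Ioc (0:ℝ) (T q 0), ENNReal.ofReal (ub (r ^ (1 / h))) ∂σ) < ∞ := by
    intro q hq h h0 hhq
    have hq0 : 0 < (q:ℝ) := hq.1
    have hUn : Ioc (0:ℝ) (T q 0) = ⋃ k, A q k := by
      refine (iUnion_annuli (hT0 q) (antitone_nat_of_succ_le (hTanti q)) ?_).symm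
      intro r hr
      obtain ⟨k, hk⟩ := exists_pow_lt_of_lt_one hr (by norm_num : (2:ℝ)⁻¹ < 1)
      refine ⟨k, lt_of_le_of_lt ?_ hk⟩
      refine (hTb q k hq).trans ?_
      exact mul_le_of_le_one_left (by positivity) (min_le_left _ _)
    rw [hUn]
    refine lt_of_le_of_lt (lintegral_iUnion_le _ _) ?_
    have hterm : ∀ k : ℕ, (∫⁻ r in A q k, ENNReal.ofReal (ub (r ^ (1 / h))) ∂σ) ≤
        ENNReal.ofReal ((2:ℝ)⁻¹ ^ k) + ENNReal.ofReal ((2:ℝ)⁻¹ ^ k) := by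
      intro k
      set m : ℕ := Encodable.encode (q, k) with hmdef
      have hpt : ∀ r ∈ A q k, ENNReal.ofReal (ub (r ^ (1 / h))) ≤
          ENNReal.ofReal (((m:ℝ) + 1) * v (r ^ (1 / (q:ℝ)))) + ENNReal.ofReal (c m) := by
        intro r hr
        have hr0 : 0 < r := (hT0 q (k + 1)).trans hr.1
        have hr1 : r ≤ 1 := hr.2.trans ((hTsmall q k hq).trans (min_le_left _ _))
        have harg : r ^ (1 / h) ≤ r ^ (1 / (q:ℝ)) :=
          Real.rpow_le_rpow_of_exponent_ge hr0 hr1 (one_div_le_one_div_of_le h0 hhq)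
        have h1 : ub (r ^ (1 / h)) ≤ max (((m:ℝ) + 1) * v (r ^ (1 / (q:ℝ)))) (c m) :=
          (hub_le _ m).trans
            (max_le_max (mul_le_mul_of_nonneg_left (hvmono harg) (by positivity)) le_rfl)
        refine le_trans (ENNReal.ofReal_le_ofReal (h1.trans
          (max_le_add_of_nonneg (mul_nonneg (by positivity) (hvnn _)) (hc0 m).le))) ?_
        rw [ENNReal.ofReal_add (mul_nonneg (by positivity) (hvnn _)) (hc0 m).le]
      have hpart1 : (∫⁻ r in A q k,
          ENNReal.ofReal (((m:ℝ) + 1) * v (r ^ (1 / (q:ℝ)))) ∂σ) ≤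
          ENNReal.ofReal ((2:ℝ)⁻¹ ^ k) := by
        have e1 : ∀ r : ℝ, ENNReal.ofReal (((m:ℝ) + 1) * v (r ^ (1 / (q:ℝ)))) =
            ENNReal.ofReal ((m:ℝ) + 1) * ENNReal.ofReal (v (r ^ (1 / (q:ℝ)))) :=
          fun r => ENNReal.ofReal_mul (by positivity)
        simp only [e1]
        rw [lintegral_const_mul' _ _ ENNReal.ofReal_ne_top]
        calc ENNReal.ofReal ((m:ℝ) + 1) *
              (∫⁻ r in A q k, ENNReal.ofReal (v (r ^ (1 / (q:ℝ)))) ∂σ)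
            ≤ ENNReal.ofReal ((m:ℝ) + 1) * J q (T q k) :=
              mul_le_mul_right (lintegral_mono_set (hAsub q k)) _
          _ ≤ ENNReal.ofReal ((m:ℝ) + 1) *
              ENNReal.ofReal ((2:ℝ)⁻¹ ^ k / ((m:ℝ) + 2)) :=
              mul_le_mul_right (hTJ q k hq) _
          _ = ENNReal.ofReal (((m:ℝ) + 1) * ((2:ℝ)⁻¹ ^ k / ((m:ℝ) + 2))) :=
              (ENNReal.ofReal_mul (by positivity)).symm
          _ ≤ ENNReal.ofReal ((2:ℝ)⁻¹ ^ k) := by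
              refine ENNReal.ofReal_le_ofReal ?_
              have e2 : ((m:ℝ) + 1) * ((2:ℝ)⁻¹ ^ k / ((m:ℝ) + 2)) =
                  (2:ℝ)⁻¹ ^ k * (((m:ℝ) + 1) / ((m:ℝ) + 2)) := by ring
              rw [e2]
              refine mul_le_of_le_one_right (by positivity) ?_
              rw [div_le_one (by positivity)]
              linarith
      have hpart2 : ENNReal.ofReal (c m) * σ (A q k) ≤ ENNReal.ofReal ((2:ℝ)⁻¹ ^ k) := by
        have hfin := hAfin q k hq
        have hσA : σ (A q k) = ENNReal.ofReal (D q k) := (ENNReal.ofReal_toReal hfin.ne).symm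
        rw [hσA, ← ENNReal.ofReal_mul (hc0 m).le]
        refine ENNReal.ofReal_le_ofReal ?_
        calc c m * D q k ≤ ((2:ℝ)⁻¹ ^ k / (D q k + 1)) * D q k :=
              mul_le_mul_of_nonneg_right (hckey q k hq) (hD0 q k)
          _ ≤ (2:ℝ)⁻¹ ^ k := by
              rw [div_mul_eq_mul_div, div_le_iff₀ (by linarith [hD0 q k])]
              have h4 : (2:ℝ)⁻¹ ^ k * D q k ≤ (2:ℝ)⁻¹ ^ k * (D q k + 1) :=
                mul_le_mul_of_nonneg_left (by linarith) (by positivity)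
              linarith
      calc (∫⁻ r in A q k, ENNReal.ofReal (ub (r ^ (1 / h))) ∂σ)
          ≤ ∫⁻ r in A q k, (ENNReal.ofReal (((m:ℝ) + 1) * v (r ^ (1 / (q:ℝ)))) +
              ENNReal.ofReal (c m)) ∂σ :=
            lintegral_mono_ae (ae_restrict_of_forall_mem measurableSet_Ioc hpt)
        _ = (∫⁻ r in A q k, ENNReal.ofReal (((m:ℝ) + 1) * v (r ^ (1 / (q:ℝ)))) ∂σ) +
              ENNReal.ofReal (c m) * σ (A q k) := by
            rw [lintegral_add_right _ measurable_const, setLIntegral_const]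
        _ ≤ ENNReal.ofReal ((2:ℝ)⁻¹ ^ k) + ENNReal.ofReal ((2:ℝ)⁻¹ ^ k) :=
            add_le_add hpart1 hpart2
    refine lt_of_le_of_lt (ENNReal.tsum_le_tsum hterm) ?_
    have e3 : ∀ k : ℕ, ENNReal.ofReal ((2:ℝ)⁻¹ ^ k) + ENNReal.ofReal ((2:ℝ)⁻¹ ^ k) =
        2 * (2:ℝ≥0∞)⁻¹ ^ k := by
      intro k
      rw [ENNReal.ofReal_pow (by norm_num), two_mul]
      congr 1 <;>
        · congr 1
          rw [ENNReal.ofReal_inv_of_pos two_pos]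
          norm_num
    rw [tsum_congr e3, ENNReal.tsum_mul_left, ENNReal.tsum_geometric,
      ENNReal.one_sub_inv_two, inv_inv]
    exact ENNReal.mul_lt_top (by norm_num) (by norm_num)
  -- divergence predicates
  set P : (ℝ → ℝ) → ℝ → Prop := fun g h =>
    ∃ ε₀ > 0, ∀ ε : ℝ, 0 < ε → ε ≤ ε₀ →
      (∫⁻ r in Ioc (0:ℝ) ε, ENNReal.ofReal (g (r ^ (1 / h))) ∂σ) = ∞ with hPdef
  have hrpow_mem : ∀ (h : ℝ), 0 < h → ∀ ε : ℝ, ε ≤ min 1 (E ^ h) → ∀ r ∈ Ioc (0:ℝ) ε,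
      r ^ (1 / h) ∈ Ioc (0:ℝ) E := by
    intro h h0 ε hε r hr
    refine ⟨Real.rpow_pos_of_pos hr.1 _, ?_⟩
    have h1 : r ^ (1 / h) ≤ (E ^ h) ^ (1 / h) :=
      Real.rpow_le_rpow hr.1.le (hr.2.trans (hε.trans (min_le_right _ _)))
        (one_div_nonneg.mpr h0.le)
    rwa [← Real.rpow_mul hE0.le, mul_one_div_cancel h0.ne', Real.rpow_one] at h1
  -- direction 1 : P u h → P ub h
  have hSsub : ∀ h : ℝ, 0 < h → P u h → P ub h := by
    rintro h h0 ⟨ε₀, hε₀, hP⟩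
    have hEh : 0 < E ^ h := Real.rpow_pos_of_pos hE0 h
    refine ⟨min ε₀ (min 1 (E ^ h)), lt_min hε₀ (lt_min one_pos hEh), ?_⟩
    intro ε hε hεle
    have hptw : ∀ r ∈ Ioc (0:ℝ) ε, ENNReal.ofReal (u (r ^ (1 / h))) ≤
        ENNReal.ofReal (ub (r ^ (1 / h))) := by
      intro r hr
      have harg : r ^ (1 / h) ∈ Ioc (0:ℝ) E :=
        hrpow_mem h h0 ε (hεle.trans (min_le_right _ _)) r hr
      exact ENNReal.ofReal_le_ofReal (hub_ge_u _ (Ioc_subset_Icc_self harg))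
    have h1 := lintegral_mono_ae (μ := σ.restrict (Ioc (0:ℝ) ε))
      (ae_restrict_of_forall_mem (μ := σ) measurableSet_Ioc hptw)
    rw [hP ε hε (hεle.trans (min_le_left _ _))] at h1
    exact top_le_iff.mp h1
  -- direction 2 : P ub h → ∀ h' > h, P u h'
  have hkey : ∀ h : ℝ, 0 < h → P ub h → ∀ h' : ℝ, h < h' → P u h' := by
    intro h h0 hPb h' hh'
    by_contra hnP
    simp only [hPdef] at hnP
    push_neg at hnP
    obtain ⟨q, hq1, hq2⟩ := exists_rat_btwn hh'
    have hq0 : 0 < (q:ℝ) := h0.trans hq1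
    have hEq : 0 < E ^ (q:ℝ) := Real.rpow_pos_of_pos hE0 _
    have hEh' : 0 < E ^ h' := Real.rpow_pos_of_pos hE0 h'
    obtain ⟨ε, hε0, hεle, hεfin⟩ :=
      hnP (min 1 (min (E ^ (q:ℝ)) (E ^ h'))) (lt_min one_pos (lt_min hEq hEh'))
    have hε1 : ε ≤ 1 := hεle.trans (min_le_left _ _)
    have hεq : ε ≤ E ^ (q:ℝ) := hεle.trans ((min_le_right _ _).trans (min_le_left _ _))
    have hεh' : ε ≤ E ^ h' := hεle.trans ((min_le_right _ _).trans (min_le_right _ _))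
    have hh'0 : 0 < h' := h0.trans hh'
    have hFq : F q := by
      refine ⟨hq0, ε, hε0, le_min hε1 hεq, ?_⟩
      have hptw : ∀ r ∈ Ioc (0:ℝ) ε, ENNReal.ofReal (v (r ^ (1 / (q:ℝ)))) ≤
          ENNReal.ofReal (u (r ^ (1 / h'))) := by
        intro r hr
        have hargq : r ^ (1 / (q:ℝ)) ∈ Ioc (0:ℝ) E :=
          hrpow_mem (q:ℝ) hq0 ε (le_min hε1 hεq) r hr
        have hargh' : r ^ (1 / h') ∈ Ioc (0:ℝ) E :=
          hrpow_mem h' hh'0 ε (le_min hε1 hεh') r hr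
        refine ENNReal.ofReal_le_ofReal ?_
        rw [hveq _ (Ioc_subset_Icc_self hargq)]
        refine humono (Ioc_subset_Icc_self hargq) (Ioc_subset_Icc_self hargh') ?_
        exact Real.rpow_le_rpow_of_exponent_ge hr.1 (hr.2.trans hε1)
          (one_div_le_one_div_of_le hq0 hq2.le)
      have h1 := lintegral_mono_ae (μ := σ.restrict (Ioc (0:ℝ) ε))
        (ae_restrict_of_forall_mem (μ := σ) measurableSet_Ioc hptw)
      exact lt_of_le_of_lt h1 (lt_top_iff_ne_top.mpr hεfin)
    have hfin := main q hFq h h0 hq1.le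
    obtain ⟨ε₀, hε₀, hPb'⟩ := hPb
    have h2 : (∫⁻ r in Ioc (0:ℝ) (min ε₀ (T q 0)),
        ENNReal.ofReal (ub (r ^ (1 / h))) ∂σ) = ∞ :=
      hPb' _ (lt_min hε₀ (hT0 q 0)) (min_le_left _ _)
    have h3 : (∫⁻ r in Ioc (0:ℝ) (min ε₀ (T q 0)),
          ENNReal.ofReal (ub (r ^ (1 / h))) ∂σ) ≤
        ∫⁻ r in Ioc (0:ℝ) (T q 0), ENNReal.ofReal (ub (r ^ (1 / h))) ∂σ :=
      lintegral_mono_set (Ioc_subset_Ioc_right (min_le_right _ _))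
    rw [h2] at h3
    rw [top_le_iff.mp h3] at hfin
    exact absurd hfin (by simp)
  -- conclusion
  refine ⟨ub, hub_gauge1, hub_prec, ?_⟩
  have hset_u : hGaugeRaw σ u = sInf {H : ℝ≥0∞ | ∃ h : ℝ, 0 < h ∧
      H = ENNReal.ofReal h ∧ P u h} := rfl
  have hset_b : hGaugeRaw σ ub = sInf {H : ℝ≥0∞ | ∃ h : ℝ, 0 < h ∧
      H = ENNReal.ofReal h ∧ P ub h} := rfl
  rw [hset_u, hset_b]
  apply le_antisymm
  · refine sInf_le_sInf ?_
    rintro H ⟨h, h0, rfl, hP⟩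
    exact ⟨h, h0, rfl, hSsub h h0 hP⟩
  · refine le_sInf ?_
    rintro H ⟨h, h0, rfl, hP⟩
    by_contra hlt
    push_neg at hlt
    have hcont : Tendsto (fun δ : ℝ => ENNReal.ofReal (h + δ)) (𝓝[>] (0:ℝ))
        (𝓝 (ENNReal.ofReal h)) := by
      have h1 : Tendsto (fun δ : ℝ => h + δ) (𝓝[>] (0:ℝ)) (𝓝 h) := by
        refine tendsto_nhdsWithin_of_tendsto_nhds ?_
        have h2 := ((continuous_const (y := h)).add continuous_id).tendsto (0:ℝ)
        simpa [Pi.add_def] using h2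
      exact (ENNReal.continuous_ofReal.tendsto h).comp h1
    have hev := hcont.eventually (Iio_mem_nhds hlt)
    obtain ⟨δ, hoflt, hδ⟩ := (hev.and self_mem_nhdsWithin).exists
    have hmem : ENNReal.ofReal (h + δ) ∈ {H : ℝ≥0∞ | ∃ h : ℝ, 0 < h ∧
        H = ENNReal.ofReal h ∧ P u h} :=
      ⟨h + δ, by have := hδ; linarith, rfl, hkey h h0 hP (h + δ) (by linarith [hδ])⟩
    exact absurd (sInf_le hmem) (not_le.mpr hoflt)


end LevyFractal
end
end

section
/- Let σ be a Borel measure on (0,∞) and let u ∈ 𝔇_1 with h_u < ∞ and u ≺ Id (that is, r ↦ u(r)/r tends monotonically to infinity at 0). Then there exists a gauge function u̲ ∈ 𝔇_1 such that u ≺ u̲ and h_{u̲} ≤ h_u. -/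
open MeasureTheory Filter Set Topology
open scoped ENNReal NNReal Classical

noncomputable section

namespace LevyFractal

/-! ### Lévy processes -/

variable {d : ℕ}

variable {Ω : Type*} [MeasurableSpace Ω]

/-- Auxiliary: chopping lemma. If a set-lintegral over `(0,X]` is infinite, then
tails `(δ,X]` have arbitrarily large integral. -/
theorem chop_aux (σ : Measure ℝ) (f : ℝ → ℝ≥0∞) (X : ℝ) (K : ℝ≥0∞) (hX : 0 < X) (hK : K ≠ ⊤)
    (hI : ∫⁻ r in Ioc (0:ℝ) X, f r ∂σ = ⊤) :
    ∃ δ : ℝ, 0 < δ ∧ K ≤ ∫⁻ r in Ioc δ X, f r ∂σ := by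
  obtain ⟨g, hgm, hgf, hgI⟩ := exists_measurable_le_lintegral_eq (σ.restrict (Ioc (0:ℝ) X)) f
  set ν := (σ.restrict (Ioc (0:ℝ) X)).withDensity g with hν
  have hcover : (⋃ k : ℕ, Ioc (X / (k + 2)) X) = Ioc (0:ℝ) X := by
    ext s
    simp only [mem_iUnion, mem_Ioc]
    constructor
    · rintro ⟨k, hk1, hk2⟩
      exact ⟨lt_trans (div_pos hX (by positivity)) hk1, hk2⟩
    · rintro ⟨hs0, hsX⟩
      obtain ⟨k, hk⟩ := exists_nat_gt (X / s)
      refine ⟨k, ?_, hsX⟩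
      rw [div_lt_iff₀ (by positivity)]
      calc X = (X / s) * s := by field_simp
      _ < k * s := by apply mul_lt_mul_of_pos_right hk hs0
      _ ≤ s * (k + 2) := by nlinarith [hs0]
  have hmono : Directed (· ⊆ ·) (fun k : ℕ => Ioc (X / (k + 2)) X) := by
    apply Monotone.directed_le
    intro a b hab
    apply Ioc_subset_Ioc_left
    apply div_le_div_of_nonneg_left hX.le (by positivity)
    · have : (a:ℝ) ≤ b := Nat.cast_le.2 hab
      linarith
  have htop : (⨆ k : ℕ, ν (Ioc (X / (k + 2)) X)) = ⊤ := by
    rw [← hmono.measure_iUnion, hcover, hν, withDensity_apply _ measurableSet_Ioc,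
      Measure.restrict_restrict_of_subset subset_rfl]
    rw [← hgI]
    exact hI
  have : K < ⨆ k : ℕ, ν (Ioc (X / (k + 2)) X) := htop ▸ hK.lt_top
  obtain ⟨k, hk⟩ := lt_iSup_iff.mp this
  refine ⟨X / (k + 2), by positivity, ?_⟩
  calc K ≤ ν (Ioc (X / (k + 2)) X) := hk.le
  _ = ∫⁻ r in Ioc (X / (k + 2)) X, g r ∂(σ.restrict (Ioc 0 X)) := by
      rw [hν, withDensity_apply _ measurableSet_Ioc]
  _ = ∫⁻ r in Ioc (X / (k + 2)) X, g r ∂σ := by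
      rw [Measure.restrict_restrict measurableSet_Ioc]
      congr 1
      rw [inter_eq_left.2 (Ioc_subset_Ioc_left (by positivity))]
  _ ≤ ∫⁻ r in Ioc (X / (k + 2)) X, f r ∂σ := lintegral_mono hgf

/-- Auxiliary: recursion on `ℕ` with definitional reduction on successors. -/
def natRecAux {S : Sort*} (x0 : S) (F : ℕ → S → S) : ℕ → S :=
  fun n => Nat.rec x0 F n

/-- **Construction of a faster gauge function with at most the same critical exponent.**
For any Borel measure `σ` on `(0,∞)` and any `u ∈ 𝔇₁` with `h_u < ∞` and `u ≺ Id`,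
there is `u̲ ∈ 𝔇₁` with `u ≺ u̲` and `h_{u̲} ≤ h_u`. -/

theorem exists_faster_gauge_le_exponent
    (σ : Measure ℝ) (hσ : σ (Iic (0:ℝ)) = 0)
    (u : ℝ → ℝ) (hu : IsGauge1 u) (huid : GaugePrec u (fun r => r))
    (hufin : hGaugeRaw σ u < ∞) :
    ∃ ul : ℝ → ℝ, IsGauge1 ul ∧ GaugePrec u ul ∧ hGaugeRaw σ ul ≤ hGaugeRaw σ u := by
  classical
  obtain ⟨⟨hu0, hu_tend, εM, hεM, huMono⟩, εA, hεA, huPos, huAnti⟩ := hu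
  obtain ⟨εP, hεP, _, huTop⟩ := huid
  have hφTop : Tendsto (fun r => u r / r) (𝓝[>] (0:ℝ)) atTop := huTop
  -- positivity of u near 0
  have hupos : ∀ s, 0 < s → s ≤ εA → 0 < u s := by
    intro s hs hsA
    have h1 := mul_pos (huPos s ⟨hs, hsA⟩) hs
    rwa [div_mul_cancel₀ _ hs.ne'] at h1
  have hunn : ∀ s, 0 ≤ s → s ≤ εM → 0 ≤ u s := by
    intro s hs hsM
    have := huMono (left_mem_Icc.2 (by linarith)) ⟨hs, hsM⟩ hs
    rwa [hu0] at this
  -- rpow helpers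
  have hpowpow : ∀ x e : ℝ, 0 ≤ x → e ≠ 0 → (x ^ (1/e)) ^ e = x := by
    intro x e hx he
    rw [← Real.rpow_mul hx, one_div_mul_cancel he, Real.rpow_one]
  -- the class of admissible exponents for a gauge g
  -- upward closure for u
  have hupQ : ∀ h' hh : ℝ, 0 < h' → h' ≤ hh →
      (∃ ε₀ > 0, ∀ ε : ℝ, 0 < ε → ε ≤ ε₀ →
        ∫⁻ r in Ioc (0:ℝ) ε, ENNReal.ofReal (u (r ^ (1/h'))) ∂σ = ∞) →
      (∃ ε₀ > 0, ∀ ε : ℝ, 0 < ε → ε ≤ ε₀ →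
        ∫⁻ r in Ioc (0:ℝ) ε, ENNReal.ofReal (u (r ^ (1/hh))) ∂σ = ∞) := by
    intro h' hh h'0 h'h ⟨ε₀, hε₀, hdiv⟩
    have hh0 : 0 < hh := lt_of_lt_of_le h'0 h'h
    refine ⟨min (min ε₀ 1) (min (εM ^ hh) (εM ^ h')), by positivity, ?_⟩
    intro ε hε hεle
    have hε1 : ε ≤ 1 := hεle.trans ((min_le_left _ _).trans (min_le_right _ _))
    have hεε₀ : ε ≤ ε₀ := hεle.trans ((min_le_left _ _).trans (min_le_left _ _))
    have hεh : ε ≤ εM ^ hh := hεle.trans ((min_le_right _ _).trans (min_le_left _ _))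
    have hεh' : ε ≤ εM ^ h' := hεle.trans ((min_le_right _ _).trans (min_le_right _ _))
    rw [eq_top_iff, ← hdiv ε hε hεε₀]
    apply lintegral_mono_ae ((ae_restrict_iff' measurableSet_Ioc).2 (ae_of_all _ ?_))
    intro r hr
    apply ENNReal.ofReal_le_ofReal
    have hr0 := hr.1
    have hle : r ^ (1/h') ≤ r ^ (1/hh) :=
      Real.rpow_le_rpow_of_exponent_ge hr0 (hr.2.trans hε1)
        (one_div_le_one_div_of_le h'0 h'h)
    have hmem : ∀ e : ℝ, 0 < e → ε ≤ εM ^ e → r ^ (1/e) ∈ Icc (0:ℝ) εM := by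
      intro e he hεe
      constructor
      · positivity
      · calc r ^ (1/e) ≤ (εM ^ e) ^ (1/e) :=
              Real.rpow_le_rpow hr0.le (hr.2.trans hεe) (by positivity)
        _ = εM := by
              rw [← Real.rpow_mul hεM.le, mul_one_div_cancel he.ne', Real.rpow_one]
    exact huMono (hmem h' h'0 hεh') (hmem hh hh0 hεh) hle
  have hQsmall : ∀ hh : ℝ, hGaugeRaw σ u < ENNReal.ofReal hh →
      (∃ ε₀ > 0, ∀ ε : ℝ, 0 < ε → ε ≤ ε₀ →
        ∫⁻ r in Ioc (0:ℝ) ε, ENNReal.ofReal (u (r ^ (1/hh))) ∂σ = ∞) := by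
    intro hh hlt
    have hh0 : 0 < hh := by
      have : (0:ℝ≥0∞) < ENNReal.ofReal hh := lt_of_le_of_lt zero_le hlt
      exact ENNReal.ofReal_pos.mp this
    unfold hGaugeRaw at hlt
    obtain ⟨H, hHmem, hHlt⟩ := sInf_lt_iff.mp hlt
    obtain ⟨h', h'0, rfl, hQ'⟩ := hHmem
    have h'lt : h' < hh := (ENNReal.ofReal_lt_ofReal_iff hh0).mp hHlt
    exact hupQ h' hh h'0 h'lt.le hQ'
  -- the approximating sequence of exponents
  set t₀ := (hGaugeRaw σ u).toReal with ht₀def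
  have ht₀ : hGaugeRaw σ u = ENNReal.ofReal t₀ := (ENNReal.ofReal_toReal hufin.ne).symm
  have ht₀0 : 0 ≤ t₀ := ENNReal.toReal_nonneg
  set h : ℕ → ℝ := fun n => t₀ + 1/(n+1) with hhdef
  have hpos : ∀ n, 0 < h n := by
    intro n
    have : (0:ℝ) < 1/((n:ℝ)+1) := by positivity
    simp only [hhdef]
    linarith
  have hQh : ∀ n, ∃ ε₀ > 0, ∀ ε : ℝ, 0 < ε → ε ≤ ε₀ →
      ∫⁻ r in Ioc (0:ℝ) ε, ENNReal.ofReal (u (r ^ (1/h n))) ∂σ = ∞ := by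
    intro n
    apply hQsmall
    rw [ht₀]
    apply (ENNReal.ofReal_lt_ofReal_iff (hpos n)).mpr
    have : (0:ℝ) < 1/((n:ℝ)+1) := by positivity
    simp only [hhdef]
    linarith
  choose εB hεB using hQh
  have hεB0 : ∀ n, 0 < εB n := fun n => (hεB n).1
  have hD : ∀ n (X : ℝ), 0 < X → X ≤ εB n →
      ∫⁻ r in Ioc (0:ℝ) X, ENNReal.ofReal (u (r ^ (1/h n))) ∂σ = ∞ :=
    fun n X hX hXe => (hεB n).2 X hX hXe
  -- eventual lower bounds for u r / r
  have hφev : ∀ M : ℝ, ∃ a > 0, ∀ s, 0 < s → s ≤ a → M ≤ u s / s := by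
    intro M
    have hev : {r : ℝ | M ≤ u r / r} ∈ 𝓝[>] (0:ℝ) := hφTop.eventually_ge_atTop M
    rw [mem_nhdsGT_iff_exists_Ioc_subset] at hev
    obtain ⟨a, ha, hsub⟩ := hev
    exact ⟨a, ha, fun s hs1 hs2 => hsub ⟨hs1, hs2⟩⟩
  -- one step of the recursive construction
  have hstep : ∀ (m : ℕ) (x : ℝ), 0 < x → ∃ y : ℝ, 0 < y ∧ (y ≤ x/2 ∧
      ((m:ℝ)+2) * max 1 (u x / x) ≤ u y / y ∧ y ^ (h (m+1)) ≤ εB (m+1) ∧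
      ∀ n, n ≤ m → x ^ (h n) ≤ εB n →
        ENNReal.ofReal ((m:ℝ)+2) * (m:ℝ≥0∞) ≤
          ∫⁻ r in Ioc (y ^ (h n)) (x ^ (h n)), ENNReal.ofReal (u (r ^ (1/h n))) ∂σ) := by
    intro m x hx
    obtain ⟨a, ha0, haM⟩ := hφev (((m:ℝ)+2) * max 1 (u x / x))
    have Hc : ∀ n : ℕ, ∃ z : ℝ, 0 < z ∧ ((n ≤ m ∧ x ^ (h n) ≤ εB n) →
        ENNReal.ofReal ((m:ℝ)+2) * (m:ℝ≥0∞) ≤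
          ∫⁻ r in Ioc (z ^ (h n)) (x ^ (h n)), ENNReal.ofReal (u (r ^ (1/h n))) ∂σ) := by
      intro n
      by_cases hc : n ≤ m ∧ x ^ (h n) ≤ εB n
      · obtain ⟨δ, hδ0, hδI⟩ := chop_aux σ _ (x ^ (h n)) (ENNReal.ofReal ((m:ℝ)+2) * (m:ℝ≥0∞))
          (Real.rpow_pos_of_pos hx _)
          (ENNReal.mul_ne_top ENNReal.ofReal_ne_top (ENNReal.natCast_ne_top m))
          (hD n _ (Real.rpow_pos_of_pos hx _) hc.2)
        refine ⟨δ ^ (1 / h n), Real.rpow_pos_of_pos hδ0 _, fun _ => ?_⟩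
        rwa [hpowpow δ (h n) hδ0.le (hpos n).ne']
      · exact ⟨1, one_pos, fun hcc => absurd hcc hc⟩
    choose z hz0 hzI using Hc
    have hrange : (Finset.range (m+1)).Nonempty := Finset.nonempty_range_iff.2 m.succ_ne_zero
    set zm := (Finset.range (m+1)).inf' hrange z with hzmdef
    have hzm0 : 0 < zm := (Finset.lt_inf'_iff hrange).2 fun i _ => hz0 i
    set y := min (min (x/2) a) (min ((εB (m+1)) ^ (1 / h (m+1))) zm) with hydef
    have hy0 : 0 < y :=
      lt_min (lt_min (by positivity) ha0)
        (lt_min (Real.rpow_pos_of_pos (hεB0 _) _) hzm0)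
    refine ⟨y, hy0, (min_le_left _ _).trans (min_le_left _ _), ?_, ?_, ?_⟩
    · exact haM y hy0 ((min_le_left _ _).trans (min_le_right _ _))
    · have hy1 : y ≤ εB (m+1) ^ (1/h (m+1)) := (min_le_right _ _).trans (min_le_left _ _)
      calc y ^ (h (m+1)) ≤ (εB (m+1) ^ (1/h (m+1))) ^ (h (m+1)) :=
            Real.rpow_le_rpow hy0.le hy1 (hpos _).le
      _ = εB (m+1) := hpowpow _ _ (hεB0 _).le (hpos _).ne'
    · intro n hn hxε
      have hyz : y ≤ z n := (min_le_right _ _).trans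
        ((min_le_right _ _).trans (Finset.inf'_le z (Finset.mem_range.2 (Nat.lt_succ_of_le hn))))
      refine le_trans (hzI n ⟨hn, hxε⟩) (lintegral_mono_set (Ioc_subset_Ioc_left ?_))
      exact Real.rpow_le_rpow hy0.le hyz (hpos n).le
  -- the recursively defined sequence η
  set η₀ := min (min εM εA) ((εB 0) ^ (1 / h 0)) with hη₀def
  have hη₀0 : 0 < η₀ :=
    lt_min (lt_min hεM hεA) (Real.rpow_pos_of_pos (hεB0 0) _)
  let F : ℕ → {x : ℝ // 0 < x} → {x : ℝ // 0 < x} := fun m p =>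
    ⟨Classical.choose (hstep m p.1 p.2), (Classical.choose_spec (hstep m p.1 p.2)).1⟩
  let η : ℕ → ℝ := fun n => (natRecAux ⟨η₀, hη₀0⟩ F n).1
  have ηpos : ∀ n, 0 < η n := fun n => (natRecAux ⟨η₀, hη₀0⟩ F n).2
  have hη0 : η 0 = η₀ := rfl
  have hspec : ∀ m, η (m+1) ≤ η m / 2 ∧
      ((m:ℝ)+2) * max 1 (u (η m) / η m) ≤ u (η (m+1)) / η (m+1) ∧
      η (m+1) ^ (h (m+1)) ≤ εB (m+1) ∧
      ∀ n, n ≤ m → η m ^ (h n) ≤ εB n →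
        ENNReal.ofReal ((m:ℝ)+2) * (m:ℝ≥0∞) ≤
          ∫⁻ r in Ioc (η (m+1) ^ (h n)) (η m ^ (h n)), ENNReal.ofReal (u (r ^ (1/h n))) ∂σ :=
    fun m => (Classical.choose_spec (hstep m (η m) (ηpos m))).2
  have ηlt : ∀ m, η (m+1) < η m :=
    fun m => lt_of_le_of_lt (hspec m).1 (half_lt_self (ηpos m))
  have ηanti : Antitone η := antitone_nat_of_succ_le fun m => (ηlt m).le
  have ηle0 : ∀ m, η m ≤ η₀ := fun m => hη0 ▸ ηanti (Nat.zero_le m)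
  have ηεM : ∀ m, η m ≤ εM := fun m =>
    (ηle0 m).trans ((min_le_left _ _).trans (min_le_left _ _))
  have ηεA : ∀ m, η m ≤ εA := fun m =>
    (ηle0 m).trans ((min_le_left _ _).trans (min_le_right _ _))
  have hgeo : ∀ m, η m ≤ η₀ * (1/2)^m := by
    intro m
    induction m with
    | zero => simpa using ηle0 0
    | succ m ih =>
      calc η (m+1) ≤ η m / 2 := (hspec m).1
      _ ≤ (η₀ * (1/2)^m) / 2 := by linarith
      _ = η₀ * (1/2)^(m+1) := by ring
  have hηsmall : ∀ s : ℝ, 0 < s → ∃ m, η m < s := by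
    intro s hs
    obtain ⟨k, hk⟩ := exists_pow_lt_of_lt_one (div_pos hs hη₀0) (by norm_num : (1:ℝ)/2 < 1)
    refine ⟨k, lt_of_le_of_lt (hgeo k) ?_⟩
    rw [← lt_div_iff₀' hη₀0]
    exact hk
  -- the invariant η m ^ h n ≤ εB n for n ≤ m
  have hinv : ∀ m n, n ≤ m → η m ^ (h n) ≤ εB n := by
    intro m
    induction m with
    | zero =>
      intro n hn
      interval_cases n
      calc η 0 ^ (h 0) ≤ ((εB 0) ^ (1/h 0)) ^ (h 0) := by
            apply Real.rpow_le_rpow (ηpos 0).le _ (hpos 0).le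
            exact hη0 ▸ min_le_right _ _
      _ = εB 0 := hpowpow _ _ (hεB0 0).le (hpos 0).ne'
    | succ m ih =>
      intro n hn
      rcases Nat.lt_succ_iff_lt_or_eq.mp (Nat.lt_succ_of_le hn) with hlt | rfl
      · have hn' : n ≤ m := Nat.lt_succ_iff.mp hlt
        calc η (m+1) ^ (h n) ≤ η m ^ (h n) :=
              Real.rpow_le_rpow (ηpos (m+1)).le (ηlt m).le (hpos n).le
        _ ≤ εB n := ih n hn'
      · exact (hspec m).2.2.1
  -- the sequence C
  set C : ℕ → ℝ := fun k => u (η k) / η k / ((k:ℝ)+1) with hCdef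
  have hφηpos : ∀ k, 0 < u (η k) / η k := fun k => huPos (η k) ⟨ηpos k, ηεA k⟩
  have hCpos : ∀ k, 0 < C k := fun k => div_pos (hφηpos k) (by positivity)
  have hφboundary : ∀ k, u (η (k+1)) / η (k+1) = ((k:ℝ)+2) * C (k+1) := by
    intro k
    have hone : ((k:ℝ)+1+1) = (k:ℝ)+2 := by ring
    simp only [hCdef, Nat.cast_succ, hone]
    rw [mul_comm, div_mul_cancel₀]
    positivity
  have hCsucc : ∀ k, C k ≤ C (k+1) := by
    intro k
    have h1 := (hspec k).2.1
    have h2 : C (k+1) = (u (η (k+1)) / η (k+1)) / ((k:ℝ)+2) := by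
      simp only [hCdef, Nat.cast_succ]
      ring_nf
    have h3 : ((k:ℝ)+2) * max 1 (u (η k) / η k) / ((k:ℝ)+2) ≤ C (k+1) := by
      rw [h2]
      gcongr

    rw [mul_div_cancel_left₀ _ (by positivity : ((k:ℝ)+2) ≠ 0)] at h3
    calc C k = u (η k) / η k / ((k:ℝ)+1) := rfl
    _ ≤ u (η k) / η k := div_le_self (hφηpos k).le (by linarith [Nat.cast_nonneg (α := ℝ) k])
    _ ≤ max 1 (u (η k) / η k) := le_max_right _ _
    _ ≤ C (k+1) := h3
  have hCmono : Monotone C := monotone_nat_of_le_succ hCsucc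
  -- the block index
  let blk : ℝ → ℕ := fun s => sInf {m | η (m+1) < s}
  have hblkne : ∀ s : ℝ, 0 < s → {m | η (m+1) < s}.Nonempty := by
    intro s hs
    obtain ⟨m, hm⟩ := hηsmall s hs
    exact ⟨m, lt_trans (ηlt m) hm⟩
  have hblk1 : ∀ s, 0 < s → η (blk s + 1) < s := fun s hs => Nat.sInf_mem (hblkne s hs)
  have hblk2 : ∀ s, 0 < s → s ≤ η 0 → s ≤ η (blk s) := by
    intro s hs hs0
    rcases hbs : blk s with _ | k
    · exact hs0
    · have hlt : k < blk s := by omega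
      have hk : k ∉ {m | η (m+1) < s} := Nat.notMem_of_lt_sInf hlt
      exact le_of_not_gt hk
  have hblkeq : ∀ s m, 0 < s → η (m+1) < s → s ≤ η m → blk s = m := by
    intro s m hs h1 h2
    refine le_antisymm (Nat.sInf_le h1) ?_
    by_contra hcon
    push_neg at hcon
    have : η m ≤ η (blk s + 1) := ηanti (by omega)
    have := lt_of_le_of_lt this (hblk1 s hs)
    linarith
  have hblkmono : ∀ s s', 0 < s → s ≤ s' → blk s' ≤ blk s := by
    intro s s' hs hss'
    exact Nat.sInf_le (lt_of_lt_of_le (hblk1 s hs) hss')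
  have hblkge : ∀ (N : ℕ) s, 0 < s → s ≤ η N → N ≤ blk s := by
    intro N s hs hsN
    by_contra hcon
    push_neg at hcon
    have : η N ≤ η (blk s + 1) := ηanti (by omega)
    have := lt_of_le_of_lt this (hblk1 s hs)
    linarith
  -- the new gauge function
  let ul : ℝ → ℝ := fun s =>
    if hc : 0 < s ∧ s ≤ η 0 then min (u s / ((blk s : ℝ)+1)) (C (blk s + 1) * s) else u s
  have hul_eq : ∀ s, 0 < s → s ≤ η 0 →
      ul s = min (u s / ((blk s : ℝ)+1)) (C (blk s + 1) * s) := by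
    intro s h1 h2
    simp only [ul]
    rw [dif_pos ⟨h1, h2⟩]
  have hη0A : η 0 ≤ εA := ηεA 0
  have hη0M : η 0 ≤ εM := ηεM 0
  have hul_le : ∀ s, 0 < s → s ≤ η 0 → ul s ≤ u s / ((blk s : ℝ)+1) :=
    fun s h1 h2 => (hul_eq s h1 h2) ▸ min_le_left _ _
  have hul_leC : ∀ s, 0 < s → s ≤ η 0 → ul s ≤ C (blk s + 1) * s :=
    fun s h1 h2 => (hul_eq s h1 h2) ▸ min_le_right _ _
  have hul_leu : ∀ s, 0 < s → s ≤ η 0 → ul s ≤ u s := by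
    intro s h1 h2
    refine (hul_le s h1 h2).trans (div_le_self (hunn s h1.le (h2.trans hη0M)) ?_)
    have : (0:ℝ) ≤ (blk s : ℝ) := Nat.cast_nonneg _
    linarith
  have hul_lb : ∀ s, 0 < s → s ≤ η 0 → u s / ((blk s : ℝ)+2) ≤ ul s := by
    intro s h1 h2
    have hus : 0 ≤ u s := hunn s h1.le (h2.trans hη0M)
    rw [hul_eq s h1 h2]
    apply le_min
    · gcongr
      linarith
    · have hφs : u s / s ≤ ((blk s:ℝ)+2) * C (blk s + 1) := by
        rw [← hφboundary (blk s)]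
        exact huAnti ⟨ηpos _, ηεA _⟩ ⟨h1, h2.trans hη0A⟩ (hblk1 s h1).le
      have husle : u s ≤ ((blk s:ℝ)+2) * C (blk s+1) * s := by
        have hmul := mul_le_mul_of_nonneg_right hφs h1.le
        rwa [div_mul_cancel₀ _ h1.ne'] at hmul
      rw [div_le_iff₀ (by positivity)]
      calc u s ≤ ((blk s:ℝ)+2) * C (blk s+1) * s := husle
      _ = C (blk s+1) * s * ((blk s:ℝ)+2) := by ring
  have hul_pos : ∀ s, 0 < s → s ≤ η 0 → 0 < ul s := by
    intro s h1 h2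
    rw [hul_eq s h1 h2]
    exact lt_min (div_pos (hupos s h1 (h2.trans hη0A)) (by positivity))
      (mul_pos (hCpos _) h1)
  have hul0 : ul 0 = 0 := by
    simp only [ul]
    rw [dif_neg (by simp)]
    exact hu0
  -- ul is a gauge function
  have hultend : Tendsto ul (𝓝[>] (0:ℝ)) (𝓝 0) := by
    apply squeeze_zero' ?_ ?_ hu_tend
    · filter_upwards [Ioc_mem_nhdsGT (ηpos 0)] with s hs
      exact (hul_pos s hs.1 hs.2).le
    · filter_upwards [Ioc_mem_nhdsGT (ηpos 0)] with s hs
      exact hul_leu s hs.1 hs.2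
  have hulmono : MonotoneOn ul (Icc 0 (η 0)) := by
    intro s hs s' hs' hss'
    rcases hs.1.eq_or_lt with h0 | hs0
    · rw [← h0, hul0]
      rcases hs'.1.eq_or_lt with h0' | hs'0
      · rw [← h0', hul0]
      · exact (hul_pos s' hs'0 hs'.2).le
    · have hs'0 : 0 < s' := lt_of_lt_of_le hs0 hss'
      have hij : blk s' ≤ blk s := hblkmono s s' hs0 hss'
      have husmem : s ∈ Icc 0 εM := ⟨hs.1, hs.2.trans hη0M⟩
      have hus'mem : s' ∈ Icc 0 εM := ⟨hs'.1, hs'.2.trans hη0M⟩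
      have huss' : u s ≤ u s' := huMono husmem hus'mem hss'
      have hus' : 0 ≤ u s' := hunn s' hs'.1 (hs'.2.trans hη0M)
      rcases eq_or_lt_of_le hij with heq | hlt
      · rw [hul_eq s hs0 hs.2, hul_eq s' hs'0 hs'.2, heq]
        apply min_le_min
        · gcongr
        · have := (hCpos (blk s + 1)).le
          gcongr
      · rw [hul_eq s hs0 hs.2, hul_eq s' hs'0 hs'.2]
        have hcast : (blk s':ℝ) + 1 ≤ (blk s:ℝ) := by exact_mod_cast hlt
        apply le_min
        · calc min (u s / ((blk s:ℝ)+1)) (C (blk s + 1) * s) ≤ u s / ((blk s:ℝ)+1) :=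
                min_le_left _ _
          _ ≤ u s' / ((blk s':ℝ)+1) := by
              apply div_le_div₀ hus' huss' (by positivity)
              linarith
        · have hsle : s ≤ η (blk s' + 1) := by
            calc s ≤ η (blk s) := hblk2 s hs0 hs.2
            _ ≤ η (blk s' + 1) := ηanti (by omega)
          have hb' : u (η (blk s'+1)) = ((blk s':ℝ)+2) * C (blk s'+1) * η (blk s'+1) :=
            (div_eq_iff (ηpos _).ne').mp (hφboundary (blk s'))
          have hηmem : η (blk s' + 1) ∈ Icc 0 εM := ⟨(ηpos _).le, ηεM _⟩
          have huη : 0 ≤ u (η (blk s' + 1)) := hunn _ (ηpos _).le (ηεM _)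
          calc min (u s / ((blk s:ℝ)+1)) (C (blk s + 1) * s) ≤ u s / ((blk s:ℝ)+1) :=
                min_le_left _ _
          _ ≤ u (η (blk s' + 1)) / ((blk s:ℝ)+1) := by
              gcongr <;> first | exact huη | exact huMono husmem hηmem hsle | positivity
          _ ≤ u (η (blk s' + 1)) / ((blk s':ℝ)+2) := by
              have hpos1 : 0 < u (η (blk s' + 1)) := hupos _ (ηpos _) (ηεA _)
              rw [div_le_div_iff_of_pos_left hpos1 (by positivity) (by positivity)]
              linarith
          _ = C (blk s' + 1) * η (blk s' + 1) := by
              rw [hb']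
              field_simp
          _ ≤ C (blk s' + 1) * s' := by
              have h9 := (hCpos (blk s' + 1)).le
              have h10 := (hblk1 s' hs'0).le
              gcongr
  -- ul r / r is positive and antitone
  have hψpos : ∀ r ∈ Ioc (0:ℝ) (η 0), 0 < ul r / r :=
    fun r hr => div_pos (hul_pos r hr.1 hr.2) hr.1
  have hψeq : ∀ s, 0 < s → s ≤ η 0 →
      ul s / s = min (u s / s / ((blk s:ℝ)+1)) (C (blk s+1)) := by
    intro s h1 h2
    rw [hul_eq s h1 h2, ← min_div_div_right h1.le]
    congr 1
    · rw [div_right_comm]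
    · exact mul_div_cancel_right₀ _ h1.ne'
  have hψanti : AntitoneOn (fun s => ul s / s) (Ioc 0 (η 0)) := by
    intro s hs s' hs' hss'
    simp only
    have hij : blk s' ≤ blk s := hblkmono s s' hs.1 hss'
    rw [hψeq s hs.1 hs.2, hψeq s' hs'.1 hs'.2]
    have hφs's : u s' / s' ≤ u s / s :=
      huAnti ⟨hs.1, hs.2.trans hη0A⟩ ⟨hs'.1, hs'.2.trans hη0A⟩ hss'
    rcases eq_or_lt_of_le hij with heq | hlt
    · rw [heq]
      apply min_le_min _ le_rfl
      gcongr
    · refine le_trans (min_le_right _ _) (le_min ?_ ?_)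
      · have h1 : C (blk s' + 1) ≤ C (blk s) := hCmono (by omega)
        have h3 : u (η (blk s)) / η (blk s) ≤ u s / s :=
          huAnti ⟨hs.1, hs.2.trans hη0A⟩ ⟨ηpos _, ηεA _⟩ (hblk2 s hs.1 hs.2)
        calc C (blk s' + 1) ≤ C (blk s) := h1
        _ = u (η (blk s)) / η (blk s) / ((blk s:ℝ)+1) := rfl
        _ ≤ u s / s / ((blk s:ℝ)+1) := by
            gcongr
      · exact hCmono (by omega)
  -- the ratio u/ul
  have hρ_ge : ∀ s, 0 < s → s ≤ η 0 → ((blk s:ℝ)+1) ≤ u s / ul s := by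
    intro s h1 h2
    rw [le_div_iff₀ (hul_pos s h1 h2)]
    calc ((blk s:ℝ)+1) * ul s ≤ ((blk s:ℝ)+1) * (u s/((blk s:ℝ)+1)) := by
          have := hul_le s h1 h2
          gcongr
    _ = u s := by field_simp
  have hρ_le : ∀ s, 0 < s → s ≤ η 0 → u s / ul s ≤ ((blk s:ℝ)+2) := by
    intro s h1 h2
    rw [div_le_iff₀ (hul_pos s h1 h2)]
    calc u s = ((blk s:ℝ)+2) * (u s/((blk s:ℝ)+2)) := by
          rw [mul_comm, div_mul_cancel₀ _ (by positivity : ((blk s:ℝ)+2) ≠ 0)]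
    _ ≤ ((blk s:ℝ)+2) * ul s := by
          have := hul_lb s h1 h2
          gcongr
  have hρanti : AntitoneOn (fun s => u s / ul s) (Ioc 0 (η 0)) := by
    intro s hs s' hs' hss'
    simp only
    have hij : blk s' ≤ blk s := hblkmono s s' hs.1 hss'
    rcases eq_or_lt_of_le hij with heq | hlt
    · rcases le_or_gt (u s' / ((blk s':ℝ)+1)) (C (blk s' + 1) * s') with hc | hc
      · have heql : ul s' = u s' / ((blk s':ℝ)+1) := by
          rw [hul_eq s' hs'.1 hs'.2]; exact min_eq_left hc
        have hu' : 0 < u s' := hupos s' hs'.1 (hs'.2.trans hη0A)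
        have hv : u s' / (u s' / ((blk s':ℝ)+1)) = ((blk s':ℝ)+1) := by
          rw [div_div_eq_mul_div, mul_comm, mul_div_assoc, div_self hu'.ne', mul_one]
        rw [heql, hv]
        have hcast : (blk s':ℝ) ≤ (blk s:ℝ) := by exact_mod_cast hij
        calc ((blk s':ℝ)+1) ≤ ((blk s:ℝ)+1) := by linarith
        _ ≤ u s / ul s := hρ_ge s hs.1 hs.2
      · have heqr : ul s' = C (blk s' + 1) * s' := by
          rw [hul_eq s' hs'.1 hs'.2]; exact min_eq_right hc.le
        have h1 : u s' / s' / C (blk s'+1) = u s' / (C (blk s'+1) * s') := by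
          rw [div_div, mul_comm]
        have h2 : ul s ≤ C (blk s + 1) * s := hul_leC s hs.1 hs.2
        have h3 : u s / s / C (blk s+1) ≤ u s / ul s := by
          have h4 : u s / s / C (blk s+1) = u s / (C (blk s+1) * s) := by
            rw [div_div, mul_comm]
          rw [h4]
          have h5 : 0 < ul s := hul_pos s hs.1 hs.2
          have h6 : 0 ≤ u s := hunn s hs.1.le (hs.2.trans hη0M)
          gcongr
        rw [heqr, ← h1]
        refine le_trans ?_ h3
        rw [heq]
        exact (div_le_div_iff_of_pos_right (hCpos _)).2
          (huAnti ⟨hs.1, hs.2.trans hη0A⟩ ⟨hs'.1, hs'.2.trans hη0A⟩ hss')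
    · have hcast : (blk s':ℝ) + 1 ≤ (blk s:ℝ) := by exact_mod_cast hlt
      calc u s'/ul s' ≤ ((blk s':ℝ)+2) := hρ_le s' hs'.1 hs'.2
      _ ≤ ((blk s:ℝ)+1) := by linarith
      _ ≤ u s/ul s := hρ_ge s hs.1 hs.2
  have hρtop : Tendsto (fun s => u s / ul s) (𝓝[>] (0:ℝ)) atTop := by
    rw [tendsto_atTop]
    intro b
    obtain ⟨N, hN⟩ := exists_nat_ge b
    filter_upwards [Ioc_mem_nhdsGT (ηpos N)] with s hs
    have hsη0 : s ≤ η 0 := hs.2.trans (ηle0 N)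
    have hge := hρ_ge s hs.1 hsη0
    have hblkN : N ≤ blk s := hblkge N s hs.1 hs.2
    have hcast : (N:ℝ) ≤ (blk s:ℝ) := by exact_mod_cast hblkN
    linarith
  have hpowpow2 : ∀ x e : ℝ, 0 ≤ x → e ≠ 0 → (x ^ e) ^ (1/e) = x := by
    intro x e hx he
    rw [← Real.rpow_mul hx, mul_one_div_cancel he, Real.rpow_one]
  -- divergence of the integrals for ul, for every exponent h n and every ε > 0
  have hdivul : ∀ n : ℕ, ∀ ε : ℝ, 0 < ε →
      ∫⁻ r in Ioc (0:ℝ) ε, ENNReal.ofReal (ul (r ^ (1/h n))) ∂σ = ∞ := by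
    intro n ε hε
    set I := ∫⁻ r in Ioc (0:ℝ) ε, ENNReal.ofReal (ul (r ^ (1/h n))) ∂σ with hI
    obtain ⟨m₀, hm₀⟩ := hηsmall (ε ^ (1/h n)) (Real.rpow_pos_of_pos hε _)
    have hth : ∀ m, m₀ ≤ m → η m ^ (h n) ≤ ε := by
      intro m hm
      calc η m ^ (h n) ≤ (ε ^ (1/h n)) ^ (h n) :=
            Real.rpow_le_rpow (ηpos m).le ((ηanti hm).trans hm₀.le) (hpos n).le
      _ = ε := hpowpow ε (h n) hε.le (hpos n).ne'
    have hkey : ∀ m : ℕ, n ≤ m → m₀ ≤ m → (m:ℝ≥0∞) ≤ I := by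
      intro m hnm hm₀m
      have hblock := (hspec m).2.2.2 n hnm (hinv m n hnm)
      have hne0 : (ENNReal.ofReal ((m:ℝ)+2)) ≠ 0 :=
        (ENNReal.ofReal_pos.mpr (by positivity)).ne'
      have hnetop : (ENNReal.ofReal ((m:ℝ)+2))⁻¹ ≠ ⊤ := ENNReal.inv_ne_top.2 hne0
      have hpt : ∀ r ∈ Ioc (η (m+1) ^ (h n)) (η m ^ (h n)),
          (ENNReal.ofReal ((m:ℝ)+2))⁻¹ * ENNReal.ofReal (u (r ^ (1/h n))) ≤
            ENNReal.ofReal (ul (r ^ (1/h n))) := by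
        intro r hr
        have hη1pos : (0:ℝ) < η (m+1) ^ (h n) := Real.rpow_pos_of_pos (ηpos _) _
        have hr0 : 0 < r := lt_trans hη1pos hr.1
        have hs1 : η (m+1) < r ^ (1/h n) := by
          have h7 := Real.rpow_lt_rpow (Real.rpow_pos_of_pos (ηpos (m+1)) (h n)).le hr.1
            (by positivity : (0:ℝ) < 1/h n)
          rwa [hpowpow2 _ _ (ηpos (m+1)).le (hpos n).ne'] at h7
        have hs2 : r ^ (1/h n) ≤ η m := by
          have h7 := Real.rpow_le_rpow hr0.le hr.2 (by positivity : (0:ℝ) ≤ 1/h n)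
          rwa [hpowpow2 _ _ (ηpos m).le (hpos n).ne'] at h7
        have hsr0 : 0 < r ^ (1/h n) := lt_trans (ηpos (m+1)) hs1
        have hsrη0 : r ^ (1/h n) ≤ η 0 := hs2.trans (ηle0 m)
        have hblks : blk (r ^ (1/h n)) = m := hblkeq _ m hsr0 hs1 hs2
        have hlb := hul_lb _ hsr0 hsrη0
        rw [hblks] at hlb
        have heq2 : (ENNReal.ofReal ((m:ℝ)+2))⁻¹ * ENNReal.ofReal (u (r ^ (1/h n)))
            = ENNReal.ofReal (u (r ^ (1/h n)) / ((m:ℝ)+2)) := by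
          rw [ENNReal.ofReal_div_of_pos (by positivity), ENNReal.div_eq_inv_mul]
        rw [heq2]
        exact ENNReal.ofReal_le_ofReal hlb
      calc (m:ℝ≥0∞) = (ENNReal.ofReal ((m:ℝ)+2))⁻¹ * (ENNReal.ofReal ((m:ℝ)+2) * (m:ℝ≥0∞)) := by
            rw [← mul_assoc, ENNReal.inv_mul_cancel hne0 ENNReal.ofReal_ne_top, one_mul]
      _ ≤ (ENNReal.ofReal ((m:ℝ)+2))⁻¹ *
            ∫⁻ r in Ioc (η (m+1) ^ (h n)) (η m ^ (h n)), ENNReal.ofReal (u (r ^ (1/h n))) ∂σ := by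
            gcongr
      _ = ∫⁻ r in Ioc (η (m+1) ^ (h n)) (η m ^ (h n)),
            (ENNReal.ofReal ((m:ℝ)+2))⁻¹ * ENNReal.ofReal (u (r ^ (1/h n))) ∂σ :=
            (lintegral_const_mul' _ _ hnetop).symm
      _ ≤ ∫⁻ r in Ioc (η (m+1) ^ (h n)) (η m ^ (h n)), ENNReal.ofReal (ul (r ^ (1/h n))) ∂σ :=
            lintegral_mono_ae ((ae_restrict_iff' measurableSet_Ioc).2 (ae_of_all _ hpt))
      _ ≤ I := by
            rw [hI]
            apply lintegral_mono_set
            exact Ioc_subset_Ioc (Real.rpow_pos_of_pos (ηpos _) _).le (hth m hm₀m)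
    by_contra hne
    obtain ⟨k, hk⟩ := ENNReal.exists_nat_gt hne
    have hle : (k:ℝ≥0∞) ≤ I := by
      refine le_trans ?_ (hkey (max k (max n m₀)) (le_max_of_le_right (le_max_left _ _))
        (le_max_of_le_right (le_max_right _ _)))
      exact_mod_cast Nat.cast_le.2 (le_max_left k (max n m₀))
    exact absurd hle (not_le.2 hk)
  -- membership of each exponent for ul
  have hul_memb : ∀ n : ℕ, hGaugeRaw σ ul ≤ ENNReal.ofReal (h n) := by
    intro n
    have hrfl : hGaugeRaw σ ul = sInf {H : ℝ≥0∞ | ∃ hh : ℝ, 0 < hh ∧ H = ENNReal.ofReal hh ∧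
        ∃ ε₀ > 0, ∀ ε : ℝ, 0 < ε → ε ≤ ε₀ →
          ∫⁻ r in Ioc (0:ℝ) ε, ENNReal.ofReal (ul (r ^ (1 / hh))) ∂σ = ∞} := rfl
    rw [hrfl]
    exact sInf_le ⟨h n, hpos n, rfl, 1, one_pos, fun ε hε _ => hdivul n ε hε⟩
  refine ⟨ul, ⟨⟨hul0, hultend, η 0, ηpos 0, hulmono⟩, η 0, ηpos 0, hψpos, hψanti⟩,
    ⟨η 0, ηpos 0, hρanti, hρtop⟩, ?_⟩
  apply ENNReal.le_of_forall_pos_le_add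
  intro ε' hε' _
  obtain ⟨n, hn⟩ := exists_nat_one_div_lt (show (0:ℝ) < (ε':ℝ) from hε')
  calc hGaugeRaw σ ul ≤ ENNReal.ofReal (h n) := hul_memb n
  _ = ENNReal.ofReal t₀ + ENNReal.ofReal (1/((n:ℝ)+1)) := by
      rw [← ENNReal.ofReal_add ht₀0 (by positivity)]
  _ = hGaugeRaw σ u + ENNReal.ofReal (1/((n:ℝ)+1)) := by rw [← ht₀]
  _ ≤ hGaugeRaw σ u + (ε' : ℝ≥0∞) := by
      gcongr
      rw [← ENNReal.ofReal_coe_nnreal]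
      exact ENNReal.ofReal_le_ofReal hn.le




end LevyFractal
end
end

section
/- Let w ∈ 𝔚, let w̃ be a continuous increasing function on [0,∞) tending to infinity at infinity and coinciding with w near 0, and let κ₁ > 1 and δ₀ > 0 be such that κ₁ w̃(δ) ≤ w̃(2δ) for all δ ∈ [0,δ₀]. For q ∈ ℕ set φ_q(r) = w̃^{−1}(r/κ₁^q) and F̃_w = (∩_{q≥1} L_{φ_q}) ∖ S. Then, with probability one, F̃_w ⊆ F_w; that is, at every t ∈ F̃_w the function w is not a modulus of continuity of X. -/
open MeasureTheory Filter Set Topology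
open scoped ENNReal NNReal Classical

noncomputable section

namespace LevyFractal

/-! ### Lévy processes -/

variable {d : ℕ}

variable {Ω : Type*} [MeasurableSpace Ω]

variable {d : ℕ} {Ω : Type*} [MeasurableSpace Ω] {P : Measure Ω}
  {X : ℝ → Ω → (Fin d → ℝ)} {a : Fin d → ℝ} {Q : (Fin d → ℝ) → (Fin d → ℝ) → ℝ}
  {π : Measure (Fin d → ℝ)}

/-- **Lemma (the auxiliary set `F̃_w` consists of times where `w` fails to be a modulus
of continuity).** With probability one, `F̃_w = (∩_{q ≥ 1} L_{φ_q}) ∖ S ⊆ F_w`, where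
`φ_q(r) = w̃⁻¹(r / κ₁^q)`. -/
theorem levy_aux_set_subset_bad_modulus_set
    (hX : IsLevyProcess P X a Q π)
    (w : ℝ → ℝ) (hw : IsModulus w)
    (wt : ℝ → ℝ) (hwtc : ContinuousOn wt (Ici (0:ℝ)))
    (hwtm : StrictMonoOn wt (Ici (0:ℝ))) (hwttop : Tendsto wt atTop atTop)
    (hwteq : ∃ ε > 0, EqOn w wt (Icc (0:ℝ) ε))
    (wtinv : ℝ → ℝ) (hwtinv : ∀ x ∈ Ici (0:ℝ), wtinv (wt x) = x)
    (κ₁ : ℝ) (hκ₁ : 1 < κ₁) (δ₀ : ℝ) (hδ₀ : 0 < δ₀)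
    (hκ : ∀ δ ∈ Icc (0:ℝ) δ₀, κ₁ * wt δ ≤ wt (2 * δ)) :
    ∀ᵐ ω ∂P,
      (⋂ (q : ℕ) (_ : 1 ≤ q), Lset X ω (fun r => wtinv (r / κ₁ ^ q)))
          \ jumpTimes X ω ⊆ badModulusSet X ω w := by
  filter_upwards [hX.cadlag] with ω hω
  intro t ht
  obtain ⟨htL, htS⟩ := ht
  simp only [Set.mem_iInter] at htL
  have ht0 : 0 ≤ t := (htL 1 le_rfl).1
  refine ⟨ht0, htS, ?_⟩
  rintro ⟨c, hc, Pol, δ, hδ, hmod⟩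
  obtain ⟨ε₁, hε₁, hwmono, hwcont⟩ := hw.2.1
  obtain ⟨ε₂, hε₂, hweq⟩ := hwteq
  set η : ℝ := min δ (min ε₁ ε₂) with hηdef
  have hη0 : 0 < η := lt_min hδ (lt_min hε₁ hε₂)
  have hηδ : η ≤ δ := min_le_left _ _
  have hηε₁ : η ≤ ε₁ := (min_le_right _ _).trans (min_le_left _ _)
  have hηε₂ : η ≤ ε₂ := (min_le_right _ _).trans (min_le_right _ _)
  have hw0 : w 0 = 0 := hw.1
  have hwt0 : wt 0 = 0 := by
    rw [← hweq (show (0:ℝ) ∈ Icc (0:ℝ) ε₂ from ⟨le_rfl, hε₂.le⟩), hw0]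
  have hwtη : 0 < wt η := by
    have h := hwtm (mem_Ici.mpr le_rfl) (mem_Ici.mpr hη0.le) hη0
    rwa [hwt0] at h
  -- surjectivity of `wt` onto `[0, ∞)`
  have hsurj : ∀ y : ℝ, 0 ≤ y → ∃ x, 0 ≤ x ∧ wt x = y := by
    intro y hy
    obtain ⟨b, hb, hb0⟩ := ((hwttop.eventually_ge_atTop y).and (eventually_ge_atTop (0:ℝ))).exists
    have hiv := intermediate_value_Icc hb0 (hwtc.mono (Icc_subset_Ici_self))
    have : y ∈ Icc (wt 0) (wt b) := by
      rw [hwt0]; exact ⟨hy, hb⟩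
    obtain ⟨x, hx, hxy⟩ := hiv this
    exact ⟨x, hx.1, hxy⟩
  -- choose a large `q`
  have hκ₁pos : (0:ℝ) < κ₁ := zero_lt_one.trans hκ₁
  obtain ⟨n, hn⟩ := pow_unbounded_of_one_lt (max (2*c) (1 / wt η)) hκ₁
  set q := n + 1 with hqdef
  have hq1 : 1 ≤ q := Nat.le_add_left 1 n
  have hqn : κ₁ ^ n ≤ κ₁ ^ q := pow_le_pow_right₀ hκ₁.le (Nat.le_succ n)
  have hκq : (0:ℝ) < κ₁ ^ q := pow_pos hκ₁pos q
  have hq2c : 2 * c < κ₁ ^ q := lt_of_le_of_lt (le_max_left _ _) (hn.trans_le hqn)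
  have hqη : 1 / κ₁ ^ q < wt η := by
    have h1 : 1 / wt η < κ₁ ^ q := lt_of_le_of_lt (le_max_right _ _) (hn.trans_le hqn)
    rw [div_lt_iff₀ hwtη] at h1
    rw [div_lt_iff₀ hκq, ← mul_comm]
    exact h1
  -- pick a jump time approximating `t`
  obtain ⟨s, hsS1, hsφ⟩ := ((htL q hq1).2).nonempty
  obtain ⟨⟨hs_pos, hs_jump⟩, hs_le1⟩ := hsS1
  set r : ℝ := ‖jump X ω s‖ with hrdef
  have hr0 : 0 < r := norm_pos_iff.mpr hs_jump
  obtain ⟨x, hx0, hxwt⟩ := hsurj (r / κ₁ ^ q) (by positivity)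
  have hinv : wtinv (r / κ₁ ^ q) = x := by rw [← hxwt, hwtinv x hx0]
  replace hsφ : |t - s| < x := by
    have h' : |t - s| < wtinv (r / κ₁ ^ q) := hsφ
    rwa [hinv] at h'
  have habs0 : (0:ℝ) ≤ |t - s| := abs_nonneg _
  have hwtts : wt |t - s| < r / κ₁ ^ q := by
    have h := hwtm (mem_Ici.mpr habs0) (mem_Ici.mpr hx0) hsφ
    rwa [hxwt] at h
  have hxη : x < η := by
    have hwx : wt x < wt η := by
      rw [hxwt]
      refine lt_of_le_of_lt ?_ hqη
      gcongr
    exact (hwtm.lt_iff_lt (mem_Ici.mpr hx0) (mem_Ici.mpr hη0.le)).mp hwx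
  have hts_lt_η : |t - s| < η := hsφ.trans hxη
  have hst : s ≠ t := by
    intro h
    exact htS (h ▸ (⟨hs_pos, hs_jump⟩ : s ∈ jumpTimes X ω))
  have hts_pos : 0 < |t - s| := abs_pos.mpr (sub_ne_zero.mpr (Ne.symm hst))
  have habs : |s - t| = |t - s| := abs_sub_comm s t
  -- bound at `s`
  have hXs : ‖X s ω - fun i => (Pol i).eval (s - t)‖ ≤ c * w |s - t| :=
    hmod s hs_pos.le (by rw [habs]; exact (hts_lt_η.trans_le hηδ).le)
  -- bound at the left limit
  obtain ⟨L, hLt⟩ := hω.2 s hs_pos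
  have hleftLim : Function.leftLim (fun u => X u ω) s = L :=
    leftLim_eq_of_tendsto hLt
  have hPe : Continuous (fun u : ℝ => (fun i => (Pol i).eval (u - t) : Fin d → ℝ)) :=
    continuous_pi fun i => (Pol i).continuous.comp (continuous_id.sub continuous_const)
  have hFlim : Tendsto (fun u => ‖X u ω - fun i => (Pol i).eval (u - t)‖) (𝓝[<] s)
      (𝓝 ‖L - fun i => (Pol i).eval (s - t)‖) :=
    (hLt.sub ((hPe.tendsto s).mono_left nhdsWithin_le_nhds)).norm
  have habscont : Tendsto (fun u : ℝ => |u - t|) (𝓝[<] s) (𝓝 |s - t|) :=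
    ((continuous_abs.comp (continuous_id.sub continuous_const)).tendsto s).mono_left
      nhdsWithin_le_nhds
  have hst_lt_ε₁ : |s - t| < ε₁ := by rw [habs]; exact hts_lt_η.trans_le hηε₁
  have hGlim : Tendsto (fun u => c * w |u - t|) (𝓝[<] s) (𝓝 (c * w |s - t|)) := by
    refine Tendsto.const_mul _ ?_
    refine (hwcont |s - t| ⟨abs_nonneg _, hst_lt_ε₁.le⟩).tendsto.comp ?_
    rw [tendsto_nhdsWithin_iff]
    exact ⟨habscont,
      (habscont.eventually_lt_const hst_lt_ε₁).mono fun u hu => ⟨abs_nonneg _, hu.le⟩⟩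
  have hst_lt_δ : |s - t| < δ := by rw [habs]; exact hts_lt_η.trans_le hηδ
  have hev : ∀ᶠ u in 𝓝[<] s, ‖X u ω - fun i => (Pol i).eval (u - t)‖ ≤ c * w |u - t| := by
    have h1 : ∀ᶠ u in 𝓝[<] s, (0:ℝ) < u :=
      Filter.Eventually.filter_mono nhdsWithin_le_nhds (eventually_gt_nhds hs_pos)
    have h2 : ∀ᶠ u in 𝓝[<] s, |u - t| < δ := habscont.eventually_lt_const hst_lt_δ
    filter_upwards [h1, h2] with u hu1 hu2
    exact hmod u hu1.le hu2.le
  have hL : ‖L - fun i => (Pol i).eval (s - t)‖ ≤ c * w |s - t| :=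
    le_of_tendsto_of_tendsto hFlim hGlim hev
  -- the jump is small
  have hjump_le : r ≤ 2 * c * w |s - t| := by
    have hje : jump X ω s = X s ω - L := by rw [jump, hleftLim]
    calc r = ‖(X s ω - fun i => (Pol i).eval (s - t)) - (L - fun i => (Pol i).eval (s - t))‖ := by
          rw [hrdef, hje]; congr 1; abel
      _ ≤ ‖X s ω - fun i => (Pol i).eval (s - t)‖ + ‖L - fun i => (Pol i).eval (s - t)‖ :=
          norm_sub_le _ _
      _ ≤ c * w |s - t| + c * w |s - t| := add_le_add hXs hL
      _ = 2 * c * w |s - t| := by ring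
  -- the jump is big
  have hweqts : w |t - s| = wt |t - s| := hweq ⟨habs0, (hts_lt_η.trans_le hηε₂).le⟩
  have hlow : κ₁ ^ q * w |t - s| < r := by
    rw [hweqts]
    rw [lt_div_iff₀ hκq] at hwtts
    linarith [hwtts]
  have hwpos : 0 < w |t - s| := by
    have h := hwmono (show (0:ℝ) ∈ Icc (0:ℝ) ε₁ from ⟨le_rfl, hε₁.le⟩)
      (show |t - s| ∈ Icc (0:ℝ) ε₁ from ⟨habs0, (hts_lt_η.trans_le hηε₁).le⟩) hts_pos
    rwa [hw0] at h
  rw [habs] at hjump_le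
  have hcon : κ₁ ^ q * w |t - s| < 2 * c * w |t - s| := hlow.trans_le hjump_le
  have : κ₁ ^ q < 2 * c := (mul_lt_mul_iff_of_pos_right hwpos).mp hcon
  linarith

end LevyFractal
end
end
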